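/- arXiv:0712.2590 — 3 statements merged into one kernel-verified Lean document; each statement's English description precedes it below -/
import Mathlib

section
/- For every integer k, the number of spanning trees T' of G^n with v(T') = k equals the number of spanning trees T of G with e ∈ T and v(T) = k − n, plus (n+1) times the number of spanning trees T of G with e ∉ T and v(T) = k − n. -/
open Sum

/-- The set of spanning trees of a simple graph `H`: subgraphs (on the full
vertex set) that are trees. -/
def spanningTrees {X : Type*} (H : SimpleGraph X) : Set (SimpleGraph X) :=
  {T | T ≤ H ∧ T.IsTree}

/-- The number of positive edges of `T` with respect to the sign function `σ`. -/
noncomputable def posCount {X : Type*} (σ : Sym2 X → ℤ) (T : SimpleGraph X) : ℕ :=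
  {ed | ed ∈ T.edgeSet ∧ σ ed = 1}.ncard

/-- The graph `G^n`: delete the edge `{u, v}` and insert a path
`u — w₁ — ⋯ — wₙ — v` through `n` new vertices. -/
def subdiv {V : Type*} (G : SimpleGraph V) (u v : V) (n : ℕ) :
    SimpleGraph (V ⊕ Fin n) :=
  SimpleGraph.fromRel fun a b =>
    match a, b with
    | inl a, inl b => G.Adj a b ∧ s(a, b) ≠ s(u, v)
    | inl a, inr i => (a = u ∧ (i : ℕ) = 0) ∨ (a = v ∧ (i : ℕ) = n - 1)
    | inr i, inr j => (j : ℕ) = (i : ℕ) + 1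
    | inr _, inl _ => False

/-- The sign function on `G^n`: old edges keep their signs, and all
new (path) edges are positive. -/
noncomputable def subdivSign {V : Type*} {n : ℕ} (σ : Sym2 V → ℤ) :
    Sym2 (V ⊕ Fin n) → ℤ :=
  Sym2.lift ⟨fun a b =>
    match a, b with
    | inl a, inl b => σ s(a, b)
    | _, _ => (1 : ℤ),
    by rintro (a | i) (b | j) <;> simp only [] <;> rw [Sym2.eq_swap]⟩


section Helpers
open SimpleGraph

variable {W W' : Type*}

/-- Transfer reachability along a vertex map, given edgewise reachability. -/
lemma reach_map {H : SimpleGraph W} {K : SimpleGraph W'} (f : W → W')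
    (h : ∀ a b, H.Adj a b → K.Reachable (f a) (f b)) {a b : W}
    (hr : H.Reachable a b) : K.Reachable (f a) (f b) := by
  obtain ⟨w⟩ := hr
  induction w with
  | nil => exact Reachable.refl _
  | cons ha p ih => exact (h _ _ ha).trans ih

/-- A connected graph on a finite vertex set has at least `card W - 1` edges. -/
lemma card_le_ncard_edgeSet_add_one [Fintype W] (H : SimpleGraph W)
    (h : H.Connected) : Fintype.card W ≤ H.edgeSet.ncard + 1 := by
  classical
  obtain ⟨root⟩ := h.nonempty
  have hstep : ∀ w : W, w ≠ root → ∃ x : W, H.Adj w x ∧ H.dist x root + 1 = H.dist w root := by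
    intro w hw
    obtain ⟨p, hp⟩ := (h.preconnected w root).exists_walk_length_eq_dist
    cases p with
    | nil => exact absurd rfl hw
    | @cons _ c _ ha q =>
      refine ⟨c, ha, ?_⟩
      have h1 : H.dist c root ≤ q.length := dist_le q
      have h2 : H.dist w root ≤ H.dist w c + H.dist c root := h.dist_triangle
      have h3 : H.dist w c ≤ 1 := by
        simpa using dist_le (Walk.cons ha Walk.nil)
      simp only [Walk.length_cons] at hp
      omega
  choose nxt hadj hdist using hstep
  have hne : ({root}ᶜ : Set W).Nonempty ∨ Fintype.card W ≤ 1 := by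
    by_cases h1 : Fintype.card W ≤ 1
    · exact Or.inr h1
    · left
      obtain ⟨x, y, hxy⟩ := Fintype.exists_pair_of_one_lt_card (α := W) (by omega)
      rcases eq_or_ne x root with rfl | hx
      · exact ⟨y, by simpa using hxy.symm⟩
      · exact ⟨x, by simpa using hx⟩
  rcases hne with hne | hle
  · set F : W → Sym2 W := fun w => if hw : w = root then s(root, root) else s(w, nxt w hw) with hF
    have hmaps : ∀ w ∈ ({root}ᶜ : Set W), F w ∈ H.edgeSet := by
      intro w hw
      simp only [Set.mem_compl_iff, Set.mem_singleton_iff] at hw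
      simp only [hF, dif_neg hw]
      exact (hadj w hw)
    have hinj : Set.InjOn F ({root}ᶜ : Set W) := by
      intro a ha b hb hab
      simp only [Set.mem_compl_iff, Set.mem_singleton_iff] at ha hb
      simp only [hF, dif_neg ha, dif_neg hb, Sym2.eq_iff] at hab
      rcases hab with ⟨rfl, -⟩ | ⟨h1, h2⟩
      · rfl
      · exfalso
        have d1 := hdist a ha
        have d2 := hdist b hb
        rw [← h1] at d2; rw [h2] at d1
        omega
    have hcard : ({root}ᶜ : Set W).ncard ≤ H.edgeSet.ncard :=
      Set.ncard_le_ncard_of_injOn F hmaps hinj (Set.toFinite _)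
    have : ({root}ᶜ : Set W).ncard = Fintype.card W - 1 := by
      rw [Set.ncard_eq_toFinset_card', Set.toFinset_compl, Set.toFinset_singleton,
        Finset.card_compl, Finset.card_singleton]
    omega
  · omega

/-- Deleting a non-bridge edge of a connected graph keeps it connected. -/
lemma connected_delete_nonbridge [Fintype W] {H : SimpleGraph W} (h : H.Connected)
    {x y : W} (hxy : H.Adj x y) (hb : ¬ H.IsBridge s(x, y)) :
    (H \ fromEdgeSet {s(x, y)}).Connected := by
  have hreach : (H \ fromEdgeSet {s(x, y)}).Reachable x y := by
    rw [isBridge_iff] at hb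
    push_neg at hb
    exact hb
  rw [connected_iff]
  refine ⟨fun a b => ?_, h.nonempty⟩
  have := reach_map (H := H) (K := H \ fromEdgeSet {s(x, y)}) id ?_ (h.preconnected a b)
  · exact this
  · intro a b hab
    by_cases hc : s(a, b) = s(x, y)
    · rw [Sym2.eq_iff] at hc
      rcases hc with ⟨rfl, rfl⟩ | ⟨rfl, rfl⟩
      · exact hreach
      · exact hreach.symm
    · exact Adj.reachable (by simp [sdiff_adj, hab, hc, fromEdgeSet_adj])

/-- A connected graph with `card W - 1` edges is a tree. -/
lemma isTree_of_connected_of_ncard (H : SimpleGraph W) [Fintype W] (h : H.Connected)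
    (hcard : H.edgeSet.ncard + 1 = Fintype.card W) : H.IsTree := by
  classical
  refine ⟨h, ?_⟩
  rw [isAcyclic_iff_forall_adj_isBridge]
  by_contra hac
  push_neg at hac
  obtain ⟨x, y, hxy, hb⟩ := hac
  have hconn := connected_delete_nonbridge h hxy hb
  have hle := card_le_ncard_edgeSet_add_one _ hconn
  have hE : (H \ fromEdgeSet {s(x, y)}).edgeSet = H.edgeSet \ {s(x, y)} := by
    rw [edgeSet_sdiff, edgeSet_fromEdgeSet]
    ext ed
    simp only [Set.mem_diff, Set.mem_singleton_iff, Set.mem_setOf_eq]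
    constructor
    · rintro ⟨h1, h2⟩
      refine ⟨h1, fun hc => h2 ⟨hc, ?_⟩⟩
      rw [hc]
      simp [hxy.ne]
    · rintro ⟨h1, h2⟩
      exact ⟨h1, fun hc => h2 hc.1⟩
  rw [hE] at hle
  have hmem : s(x, y) ∈ H.edgeSet := hxy
  have : (H.edgeSet \ {s(x, y)}).ncard = H.edgeSet.ncard - 1 := by
    rw [Set.ncard_diff_singleton_of_mem hmem]
  have hpos : 0 < H.edgeSet.ncard :=
    (Set.ncard_pos (Set.toFinite _)).mpr ⟨_, hmem⟩
  omega

/-- A tree has `card W - 1` edges (ncard version). -/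
lemma SimpleGraph.IsTree.ncard_edgeSet [Fintype W] {H : SimpleGraph W} (h : H.IsTree) :
    H.edgeSet.ncard + 1 = Fintype.card W := by
  classical
  have := h.card_edgeFinset
  rwa [Set.ncard_eq_toFinset_card' ]
end Helpers

section PV
open SimpleGraph
variable {V : Type*} (u v : V) (n : ℕ)

/-- The vertices along the inserted path: `pvert 0 = u`, `pvert m = wₘ₋₁` for
`1 ≤ m ≤ n`, and `pvert m = v` for `m > n`. -/
def pvert (m : ℕ) : V ⊕ Fin n :=
  if h0 : m = 0 then inl u else if h : m ≤ n then inr ⟨m - 1, by omega⟩ else inl v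

/-- The `j`-th path edge, `0 ≤ j ≤ n`. -/
def pE (j : ℕ) : Sym2 (V ⊕ Fin n) := s(pvert u v n j, pvert u v n (j + 1))

variable {u v n}

@[simp] lemma pvert_zero : pvert u v n 0 = inl u := by simp [pvert]

lemma pvert_inr {m : ℕ} (h1 : 1 ≤ m) (h2 : m ≤ n) :
    pvert u v n m = inr ⟨m - 1, by omega⟩ := by
  unfold pvert
  rw [dif_neg (by omega), dif_pos h2]

lemma pvert_inl_v {m : ℕ} (h : n < m) : pvert u v n m = inl v := by
  unfold pvert
  rw [dif_neg (by omega), dif_neg (by omega)]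

lemma pvert_eq_inl {m : ℕ} {a : V} (h : pvert u v n m = inl a) :
    (m = 0 ∧ a = u) ∨ (n < m ∧ a = v) := by
  rcases Nat.eq_zero_or_pos m with rfl | h1
  · rw [pvert_zero] at h
    exact Or.inl ⟨rfl, (inl.inj h).symm⟩
  rcases le_or_gt m n with h2 | h2
  · rw [pvert_inr h1 h2] at h
    exact absurd h (by simp)
  · rw [pvert_inl_v h2] at h
    exact Or.inr ⟨h2, (inl.inj h).symm⟩

lemma pvert_eq_inr {m : ℕ} {i : Fin n} (h : pvert u v n m = inr i) :
    1 ≤ m ∧ m ≤ n ∧ (i : ℕ) = m - 1 := by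
  rcases Nat.eq_zero_or_pos m with rfl | h1
  · rw [pvert_zero] at h
    exact absurd h (by simp)
  rcases le_or_gt m n with h2 | h2
  · rw [pvert_inr h1 h2] at h
    exact ⟨h1, h2, by rw [← inr.inj h]⟩
  · rw [pvert_inl_v h2] at h
    exact absurd h (by simp)

lemma pvert_ne_succ (hn : 1 ≤ n) {j : ℕ} (hj : j ≤ n) :
    pvert u v n j ≠ pvert u v n (j + 1) := by
  intro h
  rcases Nat.eq_zero_or_pos j with rfl | hj1
  · rw [pvert_zero, pvert_inr (by omega) hn] at h
    exact absurd h (by simp)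
  · rw [pvert_inr hj1 hj] at h
    rcases Nat.lt_or_ge n (j+1) with h2 | h2
    · rw [pvert_inl_v h2] at h
      exact absurd h (by simp)
    · rw [pvert_inr (by omega) h2] at h
      have := inr.inj h
      have := Fin.val_eq_val (n := n) ⟨j-1, by omega⟩ ⟨j, by omega⟩
      simp [Fin.ext_iff] at h
      omega

lemma pvert_injOn (hu : u ≠ v) {m m' : ℕ} (h : m ≤ n + 1) (h' : m' ≤ n + 1)
    (heq : pvert u v n m = pvert u v n m') : m = m' := by
  rcases Nat.eq_zero_or_pos m with rfl | h1 <;>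
    rcases Nat.eq_zero_or_pos m' with rfl | h1'
  · rfl
  · rcases le_or_gt m' n with h2' | h2'
    · rw [pvert_zero, pvert_inr h1' h2'] at heq
      exact absurd heq (by simp)
    · rw [pvert_zero, pvert_inl_v h2'] at heq
      exact absurd (inl.inj heq) hu
  · rcases le_or_gt m n with h2 | h2
    · rw [pvert_zero, pvert_inr h1 h2] at heq
      exact absurd heq (by simp)
    · rw [pvert_zero, pvert_inl_v h2] at heq
      exact absurd (inl.inj heq).symm hu
  · rcases le_or_gt m n with h2 | h2 <;> rcases le_or_gt m' n with h2' | h2'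
    · rw [pvert_inr h1 h2, pvert_inr h1' h2'] at heq
      have := inr.inj heq
      rw [Fin.mk.injEq] at this
      omega
    · rw [pvert_inr h1 h2, pvert_inl_v h2'] at heq
      exact absurd heq (by simp)
    · rw [pvert_inl_v h2, pvert_inr h1' h2'] at heq
      exact absurd heq (by simp)
    · omega

/-- Some endpoint of each path edge is an inserted vertex. -/
lemma pE_exists_inr (hn : 1 ≤ n) {j : ℕ} (hj : j ≤ n) :
    ∃ i : Fin n, inr i ∈ pE u v n j := by
  rcases Nat.eq_zero_or_pos j with rfl | hj1
  · exact ⟨⟨0, by omega⟩, by rw [pE, pvert_inr le_rfl hn]; simp⟩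
  · exact ⟨⟨j - 1, by omega⟩, by rw [pE, pvert_inr hj1 hj]; simp⟩

lemma map_inl_ne_pE (hn : 1 ≤ n) {j : ℕ} (hj : j ≤ n) (d : Sym2 V) :
    Sym2.map inl d ≠ pE u v n j := by
  intro h
  obtain ⟨i, hi⟩ := pE_exists_inr hn hj
  rw [← h] at hi
  obtain ⟨a, -, ha⟩ := Sym2.mem_map.mp hi
  exact inr_ne_inl ha.symm

lemma pE_inj (hu : u ≠ v) {j j' : ℕ} (hj : j ≤ n) (hj' : j' ≤ n)
    (h : pE u v n j = pE u v n j') : j = j' := by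
  rw [pE, pE, Sym2.eq_iff] at h
  rcases h with ⟨h1, -⟩ | ⟨h1, h2⟩
  · exact pvert_injOn hu (by omega) (by omega) h1
  · have e1 := pvert_injOn hu (by omega) (by omega) h1
    have e2 := pvert_injOn hu (by omega) (by omega) h2
    omega

/-- Characterization of adjacency in the subdivided graph. -/
theorem subdiv_adj (G : SimpleGraph V) (hn : 1 ≤ n) {x y : V ⊕ Fin n} :
    (subdiv G u v n).Adj x y ↔
      (∃ a b, x = inl a ∧ y = inl b ∧ G.Adj a b ∧ s(a, b) ≠ s(u, v)) ∨
      (∃ j ≤ n, (x = pvert u v n j ∧ y = pvert u v n (j + 1)) ∨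
        (y = pvert u v n j ∧ x = pvert u v n (j + 1))) := by
  rw [subdiv, fromRel_adj]
  constructor
  · rintro ⟨hne, hrel⟩
    match x, y with
    | inl a, inl b =>
      simp only at hrel
      rcases hrel with ⟨h1, h2⟩ | ⟨h1, h2⟩
      · exact Or.inl ⟨a, b, rfl, rfl, h1, h2⟩
      · exact Or.inl ⟨a, b, rfl, rfl, h1.symm, by rwa [Sym2.eq_swap]⟩
    | inl a, inr i =>
      simp only at hrel
      rcases hrel with (⟨rfl, h2⟩ | ⟨rfl, h2⟩) | h
      · refine Or.inr ⟨0, by omega, Or.inl ⟨by simp, ?_⟩⟩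
        rw [pvert_inr le_rfl hn]
        simp [Fin.ext_iff, h2]
      · refine Or.inr ⟨n, le_rfl, Or.inr ⟨?_, by rw [pvert_inl_v (by omega)]⟩⟩
        rw [pvert_inr hn le_rfl]
        simp [Fin.ext_iff, h2]
      · exact absurd h not_false
    | inr i, inl a =>
      simp only at hrel
      rcases hrel with h | (⟨rfl, h2⟩ | ⟨rfl, h2⟩)
      · exact absurd h not_false
      · refine Or.inr ⟨0, by omega, Or.inr ⟨by simp, ?_⟩⟩
        rw [pvert_inr le_rfl hn]
        simp [Fin.ext_iff, h2]
      · refine Or.inr ⟨n, le_rfl, Or.inl ⟨?_, by rw [pvert_inl_v (by omega)]⟩⟩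
        rw [pvert_inr hn le_rfl]
        simp [Fin.ext_iff, h2]
    | inr i, inr i' =>
      simp only at hrel
      rcases hrel with h | h
      · refine Or.inr ⟨(i : ℕ) + 1, by omega, Or.inl ⟨?_, ?_⟩⟩
        · rw [pvert_inr (by omega) (by omega)]; simp
        · rw [pvert_inr (by omega) (by omega)]; simp [Fin.ext_iff]; omega
      · refine Or.inr ⟨(i' : ℕ) + 1, by omega, Or.inr ⟨?_, ?_⟩⟩
        · rw [pvert_inr (by omega) (by omega)]; simp
        · rw [pvert_inr (by omega) (by omega)]; simp [Fin.ext_iff]; omega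
  · rintro (⟨a, b, rfl, rfl, h1, h2⟩ | ⟨j, hj, h⟩)
    · exact ⟨by simp [h1.ne], Or.inl ⟨h1, h2⟩⟩
    · have key : ∀ x' y', x' = pvert u v n j → y' = pvert u v n (j + 1) →
        (x' ≠ y' ∧ ((match x', y' with
          | inl a, inl b => G.Adj a b ∧ s(a, b) ≠ s(u, v)
          | inl a, inr i => (a = u ∧ (i : ℕ) = 0) ∨ (a = v ∧ (i : ℕ) = n - 1)
          | inr i, inr j => (j : ℕ) = (i : ℕ) + 1
          | inr _, inl _ => False) ∨ (match y', x' with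
          | inl a, inl b => G.Adj a b ∧ s(a, b) ≠ s(u, v)
          | inl a, inr i => (a = u ∧ (i : ℕ) = 0) ∨ (a = v ∧ (i : ℕ) = n - 1)
          | inr i, inr j => (j : ℕ) = (i : ℕ) + 1
          | inr _, inl _ => False))) := by
        rintro x' y' rfl rfl
        refine ⟨pvert_ne_succ hn hj, ?_⟩
        rcases Nat.eq_zero_or_pos j with rfl | hj1
        · rw [pvert_zero, pvert_inr le_rfl hn]
          exact Or.inl (Or.inl ⟨rfl, rfl⟩)
        · rcases Nat.lt_or_ge n (j + 1) with h2 | h2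
          · have hjn : j = n := by omega
            subst hjn
            rw [pvert_inl_v h2, pvert_inr hj1 le_rfl]
            exact Or.inr (Or.inr ⟨rfl, rfl⟩)
          · rw [pvert_inr hj1 hj, pvert_inr (by omega) h2]
            exact Or.inl (by simp; omega)
      rcases h with ⟨hx, hy⟩ | ⟨hy, hx⟩
      · exact key x y hx hy
      · obtain ⟨hne, hrel⟩ := key y x hy hx
        exact ⟨hne.symm, hrel.symm⟩
end PV


section C
open SimpleGraph
variable {V : Type*} {u v : V} {n : ℕ}

lemma subdiv_mono {T G : SimpleGraph V} (h : T ≤ G) :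
    subdiv T u v n ≤ subdiv G u v n := by
  intro x y hxy
  rw [subdiv, fromRel_adj] at hxy ⊢
  refine ⟨hxy.1, ?_⟩
  rcases hxy.2 with h1 | h1
  · refine Or.inl ?_
    match x, y with
    | inl a, inl b => exact ⟨h h1.1, h1.2⟩
    | inl a, inr i => exact h1
    | inr i, inr j => exact h1
    | inr i, inl a => exact h1
  · refine Or.inr ?_
    match x, y with
    | inl a, inl b => exact ⟨h h1.1, h1.2⟩
    | inl a, inr i => exact h1
    | inr i, inr j => exact h1
    | inr i, inl a => exact h1

lemma subdiv_adj_inl (hn : 1 ≤ n) {T : SimpleGraph V} {a b : V} :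
    (subdiv T u v n).Adj (inl a) (inl b) ↔ T.Adj a b ∧ s(a, b) ≠ s(u, v) := by
  rw [subdiv_adj T hn]
  constructor
  · rintro (⟨a', b', ha, hb, h1, h2⟩ | ⟨j, hj, ⟨hx, hy⟩ | ⟨hy, hx⟩⟩)
    · cases ha; cases hb; exact ⟨h1, h2⟩
    · rcases pvert_eq_inl hx.symm with ⟨rfl, -⟩ | ⟨hk, -⟩
      · rcases pvert_eq_inl hy.symm with ⟨hk, -⟩ | ⟨hk, -⟩ <;> omega
      · omega
    · rcases pvert_eq_inl hy.symm with ⟨rfl, -⟩ | ⟨hk, -⟩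
      · rcases pvert_eq_inl hx.symm with ⟨hk, -⟩ | ⟨hk, -⟩ <;> omega
      · omega
  · rintro ⟨h1, h2⟩
    exact Or.inl ⟨a, b, rfl, rfl, h1, h2⟩

lemma pE_mem_subdiv (hn : 1 ≤ n) {T : SimpleGraph V} {j : ℕ} (hj : j ≤ n) :
    pE u v n j ∈ (subdiv T u v n).edgeSet := by
  rw [pE, mem_edgeSet, subdiv_adj T hn]
  exact Or.inr ⟨j, hj, Or.inl ⟨rfl, rfl⟩⟩

lemma edge_decomp {G : SimpleGraph V} (hn : 1 ≤ n) {H : SimpleGraph (V ⊕ Fin n)}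
    (hH : H ≤ subdiv G u v n) {ed : Sym2 (V ⊕ Fin n)} (hed : ed ∈ H.edgeSet) :
    (∃ d : Sym2 V, ed = Sym2.map inl d) ∨ ∃ j ≤ n, ed = pE u v n j := by
  induction ed with
  | _ x y =>
    rw [mem_edgeSet] at hed
    have := hH hed
    rw [subdiv_adj G hn] at this
    rcases this with ⟨a, b, rfl, rfl, -, -⟩ | ⟨j, hj, ⟨hx, hy⟩ | ⟨hy, hx⟩⟩
    · exact Or.inl ⟨s(a, b), by rw [Sym2.map_pair_eq]⟩
    · exact Or.inr ⟨j, hj, by rw [hx, hy]; rfl⟩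
    · exact Or.inr ⟨j, hj, by rw [hx, hy, pE, Sym2.eq_swap]⟩

/-- The restriction of a graph on `V ⊕ Fin n` to `V`. -/
def resAux (H : SimpleGraph (V ⊕ Fin n)) : SimpleGraph V where
  Adj a b := H.Adj (inl a) (inl b)
  symm := ⟨fun a b (h : H.Adj (inl a) (inl b)) => h.symm⟩
  loopless := ⟨fun a h => H.loopless.irrefl _ h⟩

@[simp] lemma resAux_adj {H : SimpleGraph (V ⊕ Fin n)} {a b : V} :
    (resAux H).Adj a b ↔ H.Adj (inl a) (inl b) := Iff.rfl

lemma resAux_edgeSet (H : SimpleGraph (V ⊕ Fin n)) :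
    (resAux H).edgeSet = {d : Sym2 V | Sym2.map inl d ∈ H.edgeSet} := by
  ext d
  induction d with
  | _ a b => rw [Set.mem_setOf_eq, Sym2.map_pair_eq, mem_edgeSet, mem_edgeSet, resAux_adj]

lemma subdivSign_map_inl (σ : Sym2 V → ℤ) (d : Sym2 V) :
    subdivSign (n := n) σ (Sym2.map inl d) = σ d := by
  induction d with
  | _ a b => rw [Sym2.map_pair_eq]; rfl

lemma subdivSign_pE (σ : Sym2 V → ℤ) (hn : 1 ≤ n) {j : ℕ} (hj : j ≤ n) :
    subdivSign σ (pE u v n j) = 1 := by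
  rcases Nat.eq_zero_or_pos j with rfl | hj1
  · rw [pE, pvert_zero, pvert_inr le_rfl hn]; rfl
  · rw [pE, pvert_inr hj1 hj]
    rcases le_or_gt (j + 1) n with h2 | h2
    · rw [pvert_inr (by omega) h2]; rfl
    · rw [pvert_inl_v h2]; rfl

end C


section D
open SimpleGraph
variable {V : Type*} [Fintype V] {u v : V} {n : ℕ}

lemma ncard_union_decomp (hn : 1 ≤ n) (hu : u ≠ v) (E1 : Set (Sym2 V)) {J : Set ℕ}
    (hJ : ∀ j ∈ J, j ≤ n) :
    (Sym2.map inl '' E1 ∪ pE u v n '' J).ncard = E1.ncard + J.ncard := by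
  have hJfin : J.Finite := (Set.finite_Iic n).subset hJ
  rw [Set.ncard_union_eq ?_ (Set.toFinite _) (hJfin.image _),
    Set.ncard_image_of_injective _ (Sym2.map.injective inl_injective),
    Set.ncard_image_of_injOn (fun j hj j' hj' h => pE_inj hu (hJ j hj) (hJ j' hj') h)]
  rw [Set.disjoint_left]
  rintro ed ⟨d, -, rfl⟩ ⟨j, hj, h⟩
  exact map_inl_ne_pE hn (hJ j hj) d h.symm

lemma edgeSet_eq_decomp {G : SimpleGraph V} (hn : 1 ≤ n) {H : SimpleGraph (V ⊕ Fin n)}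
    (hH : H ≤ subdiv G u v n) :
    H.edgeSet = Sym2.map inl '' (resAux H).edgeSet ∪
      pE u v n '' {j | j ≤ n ∧ pE u v n j ∈ H.edgeSet} := by
  ext ed
  constructor
  · intro hed
    rcases edge_decomp hn hH hed with ⟨d, rfl⟩ | ⟨j, hj, rfl⟩
    · exact Or.inl ⟨d, by rw [resAux_edgeSet]; exact hed, rfl⟩
    · exact Or.inr ⟨j, ⟨hj, hed⟩, rfl⟩
  · rintro (⟨d, hd, rfl⟩ | ⟨j, ⟨hj, hmem⟩, rfl⟩)
    · rw [resAux_edgeSet] at hd; exact hd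
    · exact hmem

lemma ncard_edgeSet_decomp {G : SimpleGraph V} (hn : 1 ≤ n) (hu : u ≠ v)
    {H : SimpleGraph (V ⊕ Fin n)} (hH : H ≤ subdiv G u v n) :
    H.edgeSet.ncard = (resAux H).edgeSet.ncard +
      {j | j ≤ n ∧ pE u v n j ∈ H.edgeSet}.ncard := by
  nth_rewrite 1 [edgeSet_eq_decomp hn hH]
  rw [ncard_union_decomp hn hu _ (fun j hj => hj.1)]

lemma posSet_eq_decomp (σ : Sym2 V → ℤ) {G : SimpleGraph V} (hn : 1 ≤ n)
    {H : SimpleGraph (V ⊕ Fin n)} (hH : H ≤ subdiv G u v n) :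
    {ed | ed ∈ H.edgeSet ∧ subdivSign σ ed = 1} =
      Sym2.map inl '' {d | d ∈ (resAux H).edgeSet ∧ σ d = 1} ∪
      pE u v n '' {j | j ≤ n ∧ pE u v n j ∈ H.edgeSet} := by
  ext ed
  constructor
  · rintro ⟨hed, hsign⟩
    rcases edge_decomp hn hH hed with ⟨d, rfl⟩ | ⟨j, hj, rfl⟩
    · refine Or.inl ⟨d, ⟨by rw [resAux_edgeSet]; exact hed, ?_⟩, rfl⟩
      rwa [subdivSign_map_inl] at hsign
    · exact Or.inr ⟨j, ⟨hj, hed⟩, rfl⟩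
  · rintro (⟨d, ⟨hd, hsd⟩, rfl⟩ | ⟨j, ⟨hj, hmem⟩, rfl⟩)
    · rw [resAux_edgeSet] at hd
      exact ⟨hd, by rwa [subdivSign_map_inl]⟩
    · exact ⟨hmem, subdivSign_pE σ hn hj⟩

lemma posCount_decomp (σ : Sym2 V → ℤ) {G : SimpleGraph V} (hn : 1 ≤ n) (hu : u ≠ v)
    {H : SimpleGraph (V ⊕ Fin n)} (hH : H ≤ subdiv G u v n) :
    posCount (subdivSign σ) H = posCount σ (resAux H) +
      {j | j ≤ n ∧ pE u v n j ∈ H.edgeSet}.ncard := by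
  rw [posCount, posSet_eq_decomp σ hn hH, ncard_union_decomp hn hu _ (fun j hj => hj.1)]
  rfl

lemma ncard_J_full (hall : ∀ j ≤ n, pE u v n j ∈ (H : SimpleGraph (V ⊕ Fin n)).edgeSet) :
    {j | j ≤ n ∧ pE u v n j ∈ H.edgeSet}.ncard = n + 1 := by
  have : {j | j ≤ n ∧ pE u v n j ∈ H.edgeSet} = ↑(Finset.Iic n) := by
    ext j; simp only [Set.mem_setOf_eq, Finset.coe_Iic, Set.mem_Iic]
    exact ⟨fun h => h.1, fun h => ⟨h, hall j h⟩⟩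
  rw [this, Set.ncard_coe_finset, Nat.card_Iic]

lemma ncard_J_miss {H : SimpleGraph (V ⊕ Fin n)} {j₀ : ℕ} (hj₀ : j₀ ≤ n)
    (hmiss : pE u v n j₀ ∉ H.edgeSet)
    (hother : ∀ j ≤ n, j ≠ j₀ → pE u v n j ∈ H.edgeSet) :
    {j | j ≤ n ∧ pE u v n j ∈ H.edgeSet}.ncard = n := by
  have : {j | j ≤ n ∧ pE u v n j ∈ H.edgeSet} = ↑(Finset.Iic n \ {j₀}) := by
    ext j
    simp only [Set.mem_setOf_eq, Finset.coe_sdiff, Finset.coe_Iic, Set.mem_diff,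
      Set.mem_Iic, Finset.coe_singleton, Set.mem_singleton_iff]
    constructor
    · rintro ⟨h1, h2⟩
      exact ⟨h1, fun hc => hmiss (hc ▸ h2)⟩
    · rintro ⟨h1, h2⟩
      exact ⟨h1, hother j h1 h2⟩
  rw [this, Set.ncard_coe_finset, Finset.card_sdiff_of_subset (by simp [hj₀]),
    Nat.card_Iic, Finset.card_singleton]
  omega

end D


section E
open SimpleGraph
variable {V : Type*} {u v : V} {n : ℕ}

/-- Edge-preserving Bool-valued maps are constant on connected components. -/
lemma eq_of_adj_eq {W : Type*} {H : SimpleGraph W} (f : W → Bool)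
    (h : ∀ a b, H.Adj a b → f a = f b) {a b : W} (hr : H.Reachable a b) :
    f a = f b := by
  obtain ⟨w⟩ := hr
  induction w with
  | nil => rfl
  | cons ha p ih => exact (h _ _ ha).trans ih

lemma reach_chain {H : SimpleGraph (V ⊕ Fin n)} {m1 m2 : ℕ} (h12 : m1 ≤ m2)
    (hall : ∀ m, m1 ≤ m → m < m2 → pE u v n m ∈ H.edgeSet) :
    H.Reachable (pvert u v n m1) (pvert u v n m2) := by
  induction m2, h12 using Nat.le_induction with
  | base => exact Reachable.refl _
  | succ m2 h12 ih =>
    refine (ih (fun m hm1 hm2 => hall m hm1 (by omega))).trans ?_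
    exact Adj.reachable (hall m2 h12 (by omega))

lemma subdiv_connected (hn : 1 ≤ n) {T : SimpleGraph V} (hc : T.Connected) :
    (subdiv T u v n).Connected := by
  have hpath : (subdiv T u v n).Reachable (inl u) (inl v) := by
    have := reach_chain (H := subdiv T u v n) (Nat.zero_le (n + 1))
      (fun m _ hm => pE_mem_subdiv hn (by omega))
    rwa [pvert_zero, pvert_inl_v (by omega)] at this
  have key : ∀ a b, T.Adj a b → (subdiv T u v n).Reachable (inl a) (inl b) := by
    intro a b hab
    by_cases hc' : s(a, b) = s(u, v)
    · rw [Sym2.eq_iff] at hc'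
      rcases hc' with ⟨rfl, rfl⟩ | ⟨rfl, rfl⟩
      · exact hpath
      · exact hpath.symm
    · exact Adj.reachable ((subdiv_adj_inl hn).mpr ⟨hab, hc'⟩)
  have lift : ∀ a b : V, (subdiv T u v n).Reachable (inl a) (inl b) :=
    fun a b => reach_map inl key (hc.preconnected a b)
  have toU : ∀ x : V ⊕ Fin n, (subdiv T u v n).Reachable x (inl u) := by
    rintro (a | i)
    · exact lift a u
    · have h1 : (subdiv T u v n).Reachable (pvert u v n ((i : ℕ) + 1))
          (pvert u v n (n + 1)) :=
        reach_chain (by omega) (fun m _ hm => pE_mem_subdiv hn (by omega))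
      rw [pvert_inr (by omega) (by omega)] at h1
      rw [pvert_inl_v (by omega)] at h1
      simp only [Nat.add_sub_cancel] at h1
      exact (by simpa using h1 : (subdiv T u v n).Reachable (inr i) (inl v)).trans (lift v u)
  rw [connected_iff]
  exact ⟨fun x y => (toU x).trans (toU y).symm, ⟨inl u⟩⟩

lemma subdiv_delete_connected (hn : 1 ≤ n) (hu : u ≠ v) {T : SimpleGraph V}
    (hc : T.Connected) (hne : s(u, v) ∉ T.edgeSet) {j₀ : ℕ} (hj₀ : j₀ ≤ n) :
    ((subdiv T u v n).deleteEdges {pE u v n j₀}).Connected := by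
  set H := (subdiv T u v n).deleteEdges {pE u v n j₀} with hH
  have hpe : ∀ m ≤ n, m ≠ j₀ → pE u v n m ∈ H.edgeSet := by
    intro m hm hmj
    rw [hH, edgeSet_deleteEdges]
    exact ⟨pE_mem_subdiv hn hm,
      fun h => hmj (pE_inj hu hm hj₀ (by simpa using h))⟩
  have key : ∀ a b, T.Adj a b → H.Adj (inl a) (inl b) := by
    intro a b hab
    have hsne : s(a, b) ≠ s(u, v) := fun h => hne (h ▸ hab)
    rw [hH, deleteEdges_adj]
    refine ⟨(subdiv_adj_inl hn).mpr ⟨hab, hsne⟩, ?_⟩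
    have := map_inl_ne_pE (u := u) (v := v) hn hj₀ s(a, b)
    rw [Sym2.map_pair_eq] at this
    simpa using this
  have lift : ∀ a b : V, H.Reachable (inl a) (inl b) :=
    fun a b => reach_map inl (fun a b hab => (key a b hab).reachable) (hc.preconnected a b)
  have toU : ∀ x : V ⊕ Fin n, H.Reachable x (inl u) := by
    rintro (a | i)
    · exact lift a u
    · rcases le_or_gt ((i : ℕ) + 1) j₀ with hcase | hcase
      · have h1 : H.Reachable (pvert u v n 0) (pvert u v n ((i : ℕ) + 1)) :=
          reach_chain (by omega) (fun m' hm1 hm2 => hpe m' (by omega) (by omega))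
        rw [pvert_zero, pvert_inr (by omega) (by omega)] at h1
        simp only [Nat.add_sub_cancel] at h1
        exact (by simpa using h1.symm : H.Reachable (inr i) (inl u))
      · have h1 : H.Reachable (pvert u v n ((i : ℕ) + 1)) (pvert u v n (n + 1)) :=
          reach_chain (by omega) (fun m' hm1 hm2 => hpe m' (by omega) (by omega))
        rw [pvert_inr (by omega) (by omega)] at h1
        rw [pvert_inl_v (by omega)] at h1
        simp only [Nat.add_sub_cancel] at h1
        exact ((by simpa using h1 : H.Reachable (inr i) (inl v))).trans (lift v u)
  rw [connected_iff]
  exact ⟨fun x y => (toU x).trans (toU y).symm, ⟨inl u⟩⟩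

end E


section F
open SimpleGraph
variable {V : Type*} {u v : V} {n : ℕ}

lemma adj_pE_cases {G : SimpleGraph V} (hn : 1 ≤ n) {H : SimpleGraph (V ⊕ Fin n)}
    (hH : H ≤ subdiv G u v n) {x y : V ⊕ Fin n} (hxy : H.Adj x y) :
    (∃ a b, x = inl a ∧ y = inl b ∧ H.Adj (inl a) (inl b)) ∨
      ∃ j ≤ n, pE u v n j ∈ H.edgeSet ∧
        ((x = pvert u v n j ∧ y = pvert u v n (j + 1)) ∨
         (y = pvert u v n j ∧ x = pvert u v n (j + 1))) := by
  have h := hH hxy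
  rw [subdiv_adj G hn] at h
  rcases h with ⟨a, b, rfl, rfl, -, -⟩ | ⟨j, hj, h⟩
  · exact Or.inl ⟨a, b, rfl, rfl, hxy⟩
  · refine Or.inr ⟨j, hj, ?_, h⟩
    rcases h with ⟨hx, hy⟩ | ⟨hy, hx⟩
    · rw [pE, mem_edgeSet, ← hx, ← hy]; exact hxy
    · rw [pE, mem_edgeSet, ← hx, ← hy]; exact hxy.symm

lemma pvert_le_n_add_one {G : SimpleGraph V} (hn : 1 ≤ n) : True := trivial

lemma resFull_connected (hn : 1 ≤ n) (hu : u ≠ v) {G : SimpleGraph V}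
    {T' : SimpleGraph (V ⊕ Fin n)} (hT' : T' ≤ subdiv G u v n) (hc : T'.Connected) :
    (resAux T' ⊔ fromEdgeSet {s(u, v)}).Connected := by
  set R := resAux T' ⊔ fromEdgeSet {s(u, v)} with hR
  have heuv : R.Adj u v := by
    rw [hR, sup_adj, fromEdgeSet_adj]
    exact Or.inr ⟨rfl, hu⟩
  set f : V ⊕ Fin n → V := Sum.elim id (fun _ => u) with hf
  have hfp : ∀ m, m ≤ n → f (pvert u v n m) = u := by
    intro m hm
    rcases Nat.eq_zero_or_pos m with rfl | h1
    · simp [hf]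
    · rw [pvert_inr h1 hm]; simp [hf]
  have key : ∀ x y, T'.Adj x y → R.Reachable (f x) (f y) := by
    intro x y hxy
    rcases adj_pE_cases hn hT' hxy with ⟨a, b, rfl, rfl, h⟩ | ⟨j, hj, -, hca⟩
    · refine Adj.reachable ?_
      simp only [hf, Sum.elim_inl, id]
      rw [hR, sup_adj]
      exact Or.inl h
    · have goal : R.Reachable (f (pvert u v n j)) (f (pvert u v n (j + 1))) := by
        rw [hfp j hj]
        rcases Nat.lt_or_ge j n with h2 | h2
        · rw [hfp (j + 1) (by omega)]
        · have hjn : j = n := by omega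
          subst hjn
          rw [pvert_inl_v (by omega)]
          exact Adj.reachable (by simpa [hf] using heuv)
      rcases hca with ⟨hx, hy⟩ | ⟨hy, hx⟩
      · rw [hx, hy]; exact goal
      · rw [hx, hy]; exact goal.symm
  rw [connected_iff]
  constructor
  · intro a b
    have := reach_map f key (hc.preconnected (inl a) (inl b))
    simpa [hf] using this
  · exact ⟨u⟩

lemma resMiss_connected (hn : 1 ≤ n) {G : SimpleGraph V}
    {T' : SimpleGraph (V ⊕ Fin n)} (hT' : T' ≤ subdiv G u v n) (hc : T'.Connected)
    {j₀ : ℕ} (hj₀ : j₀ ≤ n) (hmiss : pE u v n j₀ ∉ T'.edgeSet) :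
    (resAux T').Connected := by
  set f : V ⊕ Fin n → V :=
    Sum.elim id (fun i => if (i : ℕ) + 1 ≤ j₀ then u else v) with hf
  have hfp : ∀ m, m ≤ n + 1 → f (pvert u v n m) = if m ≤ j₀ then u else v := by
    intro m hm
    rcases Nat.eq_zero_or_pos m with rfl | h1
    · rw [pvert_zero, if_pos (by omega)]
      simp [hf]
    rcases le_or_gt m n with h2 | h2
    · rw [pvert_inr h1 h2]
      simp only [hf, Sum.elim_inr]
      by_cases h3 : m ≤ j₀
      · rw [if_pos (show m - 1 + 1 ≤ j₀ by omega), if_pos h3]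
      · rw [if_neg (show ¬ (m - 1 + 1 ≤ j₀) by omega), if_neg h3]
    · rw [pvert_inl_v h2]
      simp only [hf, Sum.elim_inl, id]
      rw [if_neg (by omega)]
  have key : ∀ x y, T'.Adj x y → (resAux T').Reachable (f x) (f y) := by
    intro x y hxy
    rcases adj_pE_cases hn hT' hxy with ⟨a, b, rfl, rfl, h⟩ | ⟨j, hj, hmem, hca⟩
    · exact Adj.reachable (by simpa [hf] using h)
    · have hjne : j ≠ j₀ := fun hc' => hmiss (hc' ▸ hmem)
      have goal : f (pvert u v n j) = f (pvert u v n (j + 1)) := by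
        rw [hfp j (by omega), hfp (j + 1) (by omega)]
        by_cases h3 : j + 1 ≤ j₀
        · rw [if_pos (by omega), if_pos h3]
        · rw [if_neg (by omega), if_neg h3]
      rcases hca with ⟨hx, hy⟩ | ⟨hy, hx⟩
      · rw [hx, hy, goal]
      · rw [hx, hy, goal]
  rw [connected_iff]
  constructor
  · intro a b
    have := reach_map f key (hc.preconnected (inl a) (inl b))
    simpa [hf] using this
  · exact ⟨u⟩

lemma at_most_one_missing (hn : 1 ≤ n) {G : SimpleGraph V}
    {T' : SimpleGraph (V ⊕ Fin n)} (hT' : T' ≤ subdiv G u v n) (hc : T'.Connected)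
    {j j' : ℕ} (hjj' : j < j') (hj' : j' ≤ n)
    (h1 : pE u v n j ∉ T'.edgeSet) (h2 : pE u v n j' ∉ T'.edgeSet) : False := by
  set f : V ⊕ Fin n → Bool :=
    Sum.elim (fun _ => false) (fun i => decide (j ≤ (i : ℕ) ∧ (i : ℕ) < j')) with hf
  have hfp : ∀ m, m ≤ n + 1 →
      f (pvert u v n m) = decide (j + 1 ≤ m ∧ m ≤ j') := by
    intro m hm
    rcases Nat.eq_zero_or_pos m with rfl | hm1
    · rw [pvert_zero]
      simp only [hf, Sum.elim_inl]
      symm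
      rw [decide_eq_false_iff_not]
      omega
    rcases le_or_gt m n with hm2 | hm2
    · rw [pvert_inr hm1 hm2]
      simp only [hf, Sum.elim_inr]
      show decide (j ≤ m - 1 ∧ m - 1 < j') = decide (j + 1 ≤ m ∧ m ≤ j')
      rw [decide_eq_decide]
      omega
    · rw [pvert_inl_v hm2]
      simp only [hf, Sum.elim_inl]
      symm
      rw [decide_eq_false_iff_not]
      omega
  have key : ∀ x y, T'.Adj x y → f x = f y := by
    intro x y hxy
    rcases adj_pE_cases hn hT' hxy with ⟨a, b, rfl, rfl, -⟩ | ⟨m, hm, hmem, hca⟩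
    · rfl
    · have hne : m ≠ j ∧ m ≠ j' := ⟨fun hc' => h1 (hc' ▸ hmem), fun hc' => h2 (hc' ▸ hmem)⟩
      have goal : f (pvert u v n m) = f (pvert u v n (m + 1)) := by
        rw [hfp m (by omega), hfp (m + 1) (by omega)]
        exact decide_eq_decide.mpr (by omega)
      rcases hca with ⟨hx, hy⟩ | ⟨hy, hx⟩
      · rw [hx, hy, goal]
      · rw [hx, hy, goal]
  have hreach := hc.preconnected (inl u) (inr ⟨j, by omega⟩)
  have heq := eq_of_adj_eq f key hreach
  rw [show f (inl u) = false from rfl] at heq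
  have htrue : f (inr ⟨j, by omega⟩) = true := by
    simp only [hf, Sum.elim_inr]
    show decide (j ≤ j ∧ j < j') = true
    rw [decide_eq_true_eq]
    omega
  rw [htrue] at heq
  exact absurd heq (by simp)

end F


section G
open SimpleGraph
variable {V : Type*} {u v : V} {n : ℕ}

lemma pE_adj {H : SimpleGraph (V ⊕ Fin n)} {j : ℕ}
    (h : pE u v n j ∈ H.edgeSet) :
    H.Adj (pvert u v n j) (pvert u v n (j + 1)) := by
  rwa [pE, mem_edgeSet] at h

lemma resAux_le {G : SimpleGraph V} (hn : 1 ≤ n) {T' : SimpleGraph (V ⊕ Fin n)}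
    (hle : T' ≤ subdiv G u v n) : resAux T' ≤ G := by
  intro a b hab
  exact ((subdiv_adj_inl hn).mp (hle hab)).1

lemma e_not_mem_resAux {G : SimpleGraph V} (hn : 1 ≤ n) {T' : SimpleGraph (V ⊕ Fin n)}
    (hle : T' ≤ subdiv G u v n) : s(u, v) ∉ (resAux T').edgeSet := by
  rw [mem_edgeSet, resAux_adj]
  intro h
  exact ((subdiv_adj_inl hn).mp (hle h)).2 rfl

lemma subdiv_res_full (hn : 1 ≤ n) {G : SimpleGraph V} {T' : SimpleGraph (V ⊕ Fin n)}
    (hle : T' ≤ subdiv G u v n) (hall : ∀ j ≤ n, pE u v n j ∈ T'.edgeSet) :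
    subdiv (resAux T' ⊔ fromEdgeSet {s(u, v)}) u v n = T' := by
  ext x y
  rw [subdiv_adj _ hn]
  constructor
  · rintro (⟨a, b, rfl, rfl, h1, h2⟩ | ⟨j, hj, hca⟩)
    · rcases (sup_adj _ _ _ _).mp h1 with h3 | h3
      · exact h3
      · exact absurd ((fromEdgeSet_adj _).mp h3).1 h2
    · have := pE_adj (hall j hj)
      rcases hca with ⟨hx, hy⟩ | ⟨hy, hx⟩
      · rw [hx, hy]; exact this
      · rw [hx, hy]; exact this.symm
  · intro h
    rcases adj_pE_cases hn hle h with ⟨a, b, rfl, rfl, h1⟩ | ⟨j, hj, -, hca⟩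
    · refine Or.inl ⟨a, b, rfl, rfl, (sup_adj _ _ _ _).mpr (Or.inl h1), ?_⟩
      exact ((subdiv_adj_inl hn).mp (hle h)).2
    · exact Or.inr ⟨j, hj, hca⟩

lemma subdiv_res_miss (hn : 1 ≤ n) (hu : u ≠ v) {G : SimpleGraph V}
    {T' : SimpleGraph (V ⊕ Fin n)} (hle : T' ≤ subdiv G u v n) {j₀ : ℕ} (hj₀ : j₀ ≤ n)
    (hmiss : pE u v n j₀ ∉ T'.edgeSet)
    (hother : ∀ j ≤ n, j ≠ j₀ → pE u v n j ∈ T'.edgeSet) :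
    (subdiv (resAux T') u v n).deleteEdges {pE u v n j₀} = T' := by
  ext x y
  rw [deleteEdges_adj, subdiv_adj _ hn]
  constructor
  · rintro ⟨(⟨a, b, rfl, rfl, h1, h2⟩ | ⟨j, hj, hca⟩), hdel⟩
    · exact h1
    · have hsxy : s(x, y) = pE u v n j := by
        rcases hca with ⟨hx, hy⟩ | ⟨hy, hx⟩
        · rw [hx, hy]; rfl
        · rw [hx, hy, pE, Sym2.eq_swap]
      have hjne : j ≠ j₀ := by
        intro hc
        exact hdel (by rw [hsxy, hc]; rfl)
      have := pE_adj (hother j hj hjne)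
      rcases hca with ⟨hx, hy⟩ | ⟨hy, hx⟩
      · rw [hx, hy]; exact this
      · rw [hx, hy]; exact this.symm
  · intro h
    have hsne : s(x, y) ∉ ({pE u v n j₀} : Set (Sym2 (V ⊕ Fin n))) := by
      intro hc
      rw [Set.mem_singleton_iff] at hc
      exact hmiss (by rw [← hc]; exact h)
    refine ⟨?_, hsne⟩
    rcases adj_pE_cases hn hle h with ⟨a, b, rfl, rfl, h1⟩ | ⟨j, hj, -, hca⟩
    · exact Or.inl ⟨a, b, rfl, rfl, h1, ((subdiv_adj_inl hn).mp (hle h)).2⟩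
    · exact Or.inr ⟨j, hj, hca⟩

lemma res_subdiv_full (hn : 1 ≤ n) {T : SimpleGraph V} (hTuv : T.Adj u v) :
    resAux (subdiv T u v n) ⊔ fromEdgeSet {s(u, v)} = T := by
  ext a b
  rw [sup_adj, resAux_adj, subdiv_adj_inl hn, fromEdgeSet_adj]
  constructor
  · rintro (⟨h1, -⟩ | ⟨h1, h2⟩)
    · exact h1
    · rw [Set.mem_singleton_iff, Sym2.eq_iff] at h1
      rcases h1 with ⟨rfl, rfl⟩ | ⟨rfl, rfl⟩
      · exact hTuv
      · exact hTuv.symm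
  · intro h
    by_cases hc : s(a, b) = s(u, v)
    · exact Or.inr ⟨by rw [hc]; rfl, h.ne⟩
    · exact Or.inl ⟨h, hc⟩

lemma res_subdiv_miss (hn : 1 ≤ n) {T : SimpleGraph V} (hne : s(u, v) ∉ T.edgeSet)
    {j₀ : ℕ} (hj₀ : j₀ ≤ n) :
    resAux ((subdiv T u v n).deleteEdges {pE u v n j₀}) = T := by
  ext a b
  rw [resAux_adj, deleteEdges_adj, subdiv_adj_inl hn]
  constructor
  · rintro ⟨⟨h1, -⟩, -⟩
    exact h1
  · intro h
    have hsne : s(a, b) ≠ s(u, v) := fun hc => hne (hc ▸ h)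
    refine ⟨⟨h, hsne⟩, ?_⟩
    have := map_inl_ne_pE (u := u) (v := v) hn hj₀ s(a, b)
    rw [Sym2.map_pair_eq] at this
    simpa using this

lemma edgeSet_res_full {G : SimpleGraph V} (hn : 1 ≤ n) (hu : u ≠ v)
    {T' : SimpleGraph (V ⊕ Fin n)} (hle : T' ≤ subdiv G u v n) :
    (resAux T' ⊔ fromEdgeSet {s(u, v)}).edgeSet =
      insert s(u, v) (resAux T').edgeSet := by
  rw [edgeSet_sup, edgeSet_fromEdgeSet]
  have : {s(u, v)} \ Sym2.diagSet = {s(u, v)} := by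
    ext d
    simp only [Set.mem_diff, Set.mem_singleton_iff, Set.mem_setOf_eq, Sym2.mem_diagSet]
    constructor
    · rintro ⟨h, -⟩; exact h
    · rintro rfl
      exact ⟨rfl, by simp [Sym2.mk_isDiag_iff, hu]⟩
  rw [this, Set.union_singleton]

lemma resAux_subdiv_edgeSet (hn : 1 ≤ n) {T : SimpleGraph V} :
    (resAux (subdiv T u v n)).edgeSet = T.edgeSet \ {s(u, v)} := by
  ext d
  induction d with
  | _ a b =>
    rw [mem_edgeSet, resAux_adj, subdiv_adj_inl hn]
    simp [Set.mem_diff]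

end G


section H
open SimpleGraph
variable {V : Type*} [Fintype V] {u v : V} {n : ℕ}

lemma posCount_insert_edge (σ : Sym2 V → ℤ) {T1 T2 : SimpleGraph V}
    (hE : T2.edgeSet = insert s(u, v) T1.edgeSet) (hnm : s(u, v) ∉ T1.edgeSet)
    (hsign : σ s(u, v) = 1) : posCount σ T2 = posCount σ T1 + 1 := by
  have hset : {ed | ed ∈ T2.edgeSet ∧ σ ed = 1} =
      insert s(u, v) {ed | ed ∈ T1.edgeSet ∧ σ ed = 1} := by
    rw [hE]
    ext d
    simp only [Set.mem_setOf_eq, Set.mem_insert_iff]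
    constructor
    · rintro ⟨rfl | h1, h2⟩
      · exact Or.inl rfl
      · exact Or.inr ⟨h1, h2⟩
    · rintro (rfl | ⟨h1, h2⟩)
      · exact ⟨Or.inl rfl, hsign⟩
      · exact ⟨Or.inr h1, h2⟩
  rw [posCount, posCount, hset, Set.ncard_insert_of_notMem
    (fun hc => hnm hc.1) (Set.toFinite _)]

lemma ncard_insert_edge {T1 T2 : SimpleGraph V}
    (hE : T2.edgeSet = insert s(u, v) T1.edgeSet) (hnm : s(u, v) ∉ T1.edgeSet) :
    T2.edgeSet.ncard = T1.edgeSet.ncard + 1 := by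
  rw [hE, Set.ncard_insert_of_notMem hnm (Set.toFinite _)]

/-- Lift of a spanning tree through `e`. -/
lemma liftA_spec (σ : Sym2 V → ℤ) (hsign : σ s(u, v) = 1) (hn : 1 ≤ n) (hu : u ≠ v)
    {G T : SimpleGraph V} (hTG : T ≤ G) (hTree : T.IsTree) (hTuv : T.Adj u v) :
    subdiv T u v n ≤ subdiv G u v n ∧ (subdiv T u v n).IsTree ∧
      posCount (subdivSign σ) (subdiv T u v n) = posCount σ T + n := by
  have hEres : (resAux (subdiv T u v n)).edgeSet = T.edgeSet \ {s(u, v)} :=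
    resAux_subdiv_edgeSet hn
  have hmem : s(u, v) ∈ T.edgeSet := hTuv
  have hE : T.edgeSet = insert s(u, v) (resAux (subdiv T u v n)).edgeSet := by
    rw [hEres, Set.insert_diff_singleton, Set.insert_eq_self.mpr hmem]
  have hnm : s(u, v) ∉ (resAux (subdiv T u v n)).edgeSet := by
    rw [hEres]; exact fun hc => hc.2 rfl
  have hJ : {j | j ≤ n ∧ pE u v n j ∈ (subdiv T u v n).edgeSet}.ncard = n + 1 :=
    ncard_J_full (fun j hj => pE_mem_subdiv hn hj)
  have hcount : (subdiv T u v n).edgeSet.ncard =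
      (resAux (subdiv T u v n)).edgeSet.ncard + (n + 1) := by
    rw [ncard_edgeSet_decomp hn hu (le_refl (subdiv T u v n)), hJ]
  have hTcard : T.edgeSet.ncard + 1 = Fintype.card V := hTree.ncard_edgeSet
  have hres1 : T.edgeSet.ncard = (resAux (subdiv T u v n)).edgeSet.ncard + 1 :=
    ncard_insert_edge hE hnm
  refine ⟨subdiv_mono hTG, ?_, ?_⟩
  · refine isTree_of_connected_of_ncard _ (subdiv_connected hn hTree.isConnected) ?_
    rw [Fintype.card_sum, Fintype.card_fin]
    omega
  · have h1 : posCount (subdivSign σ) (subdiv T u v n) =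
        posCount σ (resAux (subdiv T u v n)) + (n + 1) := by
      rw [posCount_decomp σ hn hu (le_refl (subdiv T u v n)), hJ]
    have h2 : posCount σ T = posCount σ (resAux (subdiv T u v n)) + 1 :=
      posCount_insert_edge σ hE hnm hsign
    omega

/-- Lift of a spanning tree avoiding `e`, with one path edge removed. -/
lemma liftB_spec (σ : Sym2 V → ℤ) (hn : 1 ≤ n) (hu : u ≠ v)
    {G T : SimpleGraph V} (hTG : T ≤ G) (hTree : T.IsTree)
    (hne : s(u, v) ∉ T.edgeSet) {j₀ : ℕ} (hj₀ : j₀ ≤ n) :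
    (subdiv T u v n).deleteEdges {pE u v n j₀} ≤ subdiv G u v n ∧
      ((subdiv T u v n).deleteEdges {pE u v n j₀}).IsTree ∧
      posCount (subdivSign σ) ((subdiv T u v n).deleteEdges {pE u v n j₀}) =
        posCount σ T + n := by
  set H := (subdiv T u v n).deleteEdges {pE u v n j₀} with hH
  have hres : resAux H = T := res_subdiv_miss hn hne hj₀
  have hHle : H ≤ subdiv G u v n :=
    le_trans (deleteEdges_le _) (subdiv_mono hTG)
  have hmiss : pE u v n j₀ ∉ H.edgeSet := by
    rw [hH, edgeSet_deleteEdges]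
    exact fun hc => hc.2 rfl
  have hother : ∀ j ≤ n, j ≠ j₀ → pE u v n j ∈ H.edgeSet := by
    intro j hj hjne
    rw [hH, edgeSet_deleteEdges]
    exact ⟨pE_mem_subdiv hn hj, fun hc => hjne (pE_inj hu hj hj₀ (by simpa using hc))⟩
  have hJ : {j | j ≤ n ∧ pE u v n j ∈ H.edgeSet}.ncard = n :=
    ncard_J_miss hj₀ hmiss hother
  have hTcard : T.edgeSet.ncard + 1 = Fintype.card V := hTree.ncard_edgeSet
  refine ⟨hHle, ?_, ?_⟩
  · refine isTree_of_connected_of_ncard _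
      (subdiv_delete_connected hn hu hTree.isConnected hne hj₀) ?_
    rw [ncard_edgeSet_decomp hn hu hHle, hJ, hres, Fintype.card_sum, Fintype.card_fin]
    omega
  · rw [posCount_decomp σ hn hu hHle, hJ, hres]

/-- Classification of spanning trees of the subdivided graph. -/
lemma classify (σ : Sym2 V → ℤ) (hsign : σ s(u, v) = 1) (hn : 1 ≤ n)
    {G : SimpleGraph V} (he : G.Adj u v) {T' : SimpleGraph (V ⊕ Fin n)}
    (hle : T' ≤ subdiv G u v n) (htree : T'.IsTree) :
    (∃ T : SimpleGraph V, T ≤ G ∧ T.IsTree ∧ T.Adj u v ∧ subdiv T u v n = T' ∧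
      posCount (subdivSign σ) T' = posCount σ T + n) ∨
    (∃ T : SimpleGraph V, ∃ j₀ : Fin (n + 1), T ≤ G ∧ T.IsTree ∧
      s(u, v) ∉ T.edgeSet ∧ (subdiv T u v n).deleteEdges {pE u v n (j₀ : ℕ)} = T' ∧
      posCount (subdivSign σ) T' = posCount σ T + n) := by
  have hu : u ≠ v := he.ne
  by_cases hall : ∀ j ≤ n, pE u v n j ∈ T'.edgeSet
  · left
    set T := resAux T' ⊔ fromEdgeSet {s(u, v)} with hT
    have hTG : T ≤ G := by
      rw [hT]
      refine sup_le (resAux_le hn hle) ?_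
      intro a b hab
      rw [fromEdgeSet_adj] at hab
      obtain ⟨h1, -⟩ := hab
      rw [Set.mem_singleton_iff, Sym2.eq_iff] at h1
      rcases h1 with ⟨rfl, rfl⟩ | ⟨rfl, rfl⟩
      · exact he
      · exact he.symm
    have hTE : T.edgeSet = insert s(u, v) (resAux T').edgeSet :=
      edgeSet_res_full hn hu hle
    have hnm := e_not_mem_resAux hn hle
    have hJ : {j | j ≤ n ∧ pE u v n j ∈ T'.edgeSet}.ncard = n + 1 :=
      ncard_J_full (fun j hj => hall j hj)
    have hcount := ncard_edgeSet_decomp hn hu hle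
    have hT'card : T'.edgeSet.ncard + 1 = Fintype.card (V ⊕ Fin n) := htree.ncard_edgeSet
    have hTuv : T.Adj u v := by
      rw [hT, sup_adj, fromEdgeSet_adj]
      exact Or.inr ⟨rfl, hu⟩
    refine ⟨T, hTG, ?_, hTuv, subdiv_res_full hn hle hall, ?_⟩
    · refine isTree_of_connected_of_ncard _ (resFull_connected hn hu hle htree.isConnected) ?_
      have h1 : T.edgeSet.ncard = (resAux T').edgeSet.ncard + 1 :=
        ncard_insert_edge hTE hnm
      rw [Fintype.card_sum, Fintype.card_fin] at hT'card
      rw [hJ] at hcount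
      omega
    · have h1 : posCount (subdivSign σ) T' = posCount σ (resAux T') + (n + 1) := by
        rw [posCount_decomp σ hn hu hle, hJ]
      have h2 : posCount σ T = posCount σ (resAux T') + 1 :=
        posCount_insert_edge σ hTE hnm hsign
      omega
  · right
    push_neg at hall
    obtain ⟨j₀, hj₀, hmiss⟩ := hall
    have hother : ∀ j ≤ n, j ≠ j₀ → pE u v n j ∈ T'.edgeSet := by
      intro j hj hjne
      by_contra hc
      rcases Nat.lt_or_ge j j₀ with h | h
      · exact at_most_one_missing hn hle htree.isConnected h hj₀ hc hmiss
      · exact at_most_one_missing hn hle htree.isConnected (by omega) hj hmiss hc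
    have hTG : resAux T' ≤ G := resAux_le hn hle
    have hnm := e_not_mem_resAux hn hle
    have hJ : {j | j ≤ n ∧ pE u v n j ∈ T'.edgeSet}.ncard = n :=
      ncard_J_miss hj₀ hmiss hother
    have hcount := ncard_edgeSet_decomp hn hu hle
    have hT'card : T'.edgeSet.ncard + 1 = Fintype.card (V ⊕ Fin n) := htree.ncard_edgeSet
    refine ⟨resAux T', ⟨j₀, by omega⟩, hTG, ?_, hnm,
      subdiv_res_miss hn hu hle hj₀ hmiss hother, ?_⟩
    · refine isTree_of_connected_of_ncard _
        (resMiss_connected hn hle htree.isConnected hj₀ hmiss) ?_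
      rw [Fintype.card_sum, Fintype.card_fin] at hT'card
      rw [hJ] at hcount
      omega
    · rw [posCount_decomp σ hn hu hle, hJ]

end H


/-- For every integer `k`, the number of spanning trees `T'` of `G^n` with
`v(T') = k` equals the number of spanning trees `T` of `G` with `e ∈ T` and
`v(T) = k - n`, plus `(n+1)` times the number of spanning trees `T` of `G`
with `e ∉ T` and `v(T) = k - n`. -/
theorem subdiv_posCount_card {V : Type*} [Fintype V] (G : SimpleGraph V)
    (hG : G.Connected) (σ : Sym2 V → ℤ)
    (hσ : ∀ ed ∈ G.edgeSet, σ ed = 1 ∨ σ ed = -1)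
    (u v : V) (he : G.Adj u v) (hsign : σ s(u, v) = 1)
    (n : ℕ) (hn : 1 ≤ n) (k : ℤ) :
    {T' ∈ spanningTrees (subdiv G u v n) |
        (posCount (subdivSign σ) T' : ℤ) = k}.ncard =
      {T ∈ spanningTrees G |
          s(u, v) ∈ T.edgeSet ∧ (posCount σ T : ℤ) = k - n}.ncard +
        (n + 1) *
          {T ∈ spanningTrees G |
              s(u, v) ∉ T.edgeSet ∧ (posCount σ T : ℤ) = k - n}.ncard := by
  classical
  have hu : u ≠ v := he.ne
  set S' := {T' ∈ spanningTrees (subdiv G u v n) |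
    (posCount (subdivSign σ) T' : ℤ) = k} with hS'
  set A := {T ∈ spanningTrees G |
    s(u, v) ∈ T.edgeSet ∧ (posCount σ T : ℤ) = k - n} with hA
  set B := {T ∈ spanningTrees G |
    s(u, v) ∉ T.edgeSet ∧ (posCount σ T : ℤ) = k - n} with hB
  set F : SimpleGraph V ⊕ SimpleGraph V × Fin (n + 1) → SimpleGraph (V ⊕ Fin n) :=
    Sum.elim (fun T => subdiv T u v n)
      (fun p => (subdiv p.1 u v n).deleteEdges {pE u v n ((p.2 : ℕ))}) with hF
  set D : Set (SimpleGraph V ⊕ SimpleGraph V × Fin (n + 1)) :=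
    (inl '' A) ∪ (inr '' (B ×ˢ (Set.univ : Set (Fin (n + 1))))) with hD
  -- membership extraction helpers
  have hAmem : ∀ T, T ∈ A ↔ (T ≤ G ∧ T.IsTree) ∧
      s(u, v) ∈ T.edgeSet ∧ (posCount σ T : ℤ) = k - n := by
    intro T; rw [hA]; exact Iff.rfl
  have hBmem : ∀ T, T ∈ B ↔ (T ≤ G ∧ T.IsTree) ∧
      s(u, v) ∉ T.edgeSet ∧ (posCount σ T : ℤ) = k - n := by
    intro T; rw [hB]; exact Iff.rfl
  have hS'mem : ∀ T', T' ∈ S' ↔ (T' ≤ subdiv G u v n ∧ T'.IsTree) ∧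
      (posCount (subdivSign σ) T' : ℤ) = k := by
    intro T'; rw [hS']; exact Iff.rfl
  -- F maps D into S'
  have hmaps : ∀ x ∈ D, F x ∈ S' := by
    rintro (T | ⟨T, j⟩) hx
    · have hTA : T ∈ A := by
        rcases hx with ⟨T0, hT0, h⟩ | ⟨p, -, h⟩
        · exact (inl.inj h) ▸ hT0
        · exact absurd h inr_ne_inl
      rw [hAmem] at hTA
      obtain ⟨⟨hle, htree⟩, hmem, hcount⟩ := hTA
      obtain ⟨h1, h2, h3⟩ := liftA_spec σ hsign hn hu hle htree ((SimpleGraph.mem_edgeSet _).mp hmem)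
      rw [hS'mem]
      refine ⟨⟨h1, h2⟩, ?_⟩
      show ((posCount (subdivSign σ) (subdiv T u v n) : ℤ)) = k
      rw [h3]; push_cast; omega
    · have hTB : T ∈ B ∧ True := by
        rcases hx with ⟨T0, -, h⟩ | ⟨p, hp, h⟩
        · exact absurd h inl_ne_inr
        · obtain ⟨hp1, -⟩ := hp
          cases inr.inj h
          exact ⟨hp1, trivial⟩
      rw [hBmem] at hTB
      obtain ⟨⟨⟨hle, htree⟩, hmem, hcount⟩, -⟩ := hTB
      have hj : (j : ℕ) ≤ n := by omega
      obtain ⟨h1, h2, h3⟩ := liftB_spec σ hn hu hle htree hmem hj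
      rw [hS'mem]
      refine ⟨⟨h1, h2⟩, ?_⟩
      show ((posCount (subdivSign σ)
        ((subdiv T u v n).deleteEdges {pE u v n ((j : ℕ))}) : ℤ)) = k
      rw [h3]; push_cast; omega
  -- F is injective on D
  have hinj : Set.InjOn F D := by
    rintro (T1 | ⟨T1, j1⟩) hx (T2 | ⟨T2, j2⟩) hy hFxy
    · have hTA1 : T1 ∈ A := by
        rcases hx with ⟨T0, hT0, h⟩ | ⟨p, -, h⟩
        · exact (inl.inj h) ▸ hT0
        · exact absurd h inr_ne_inl
      have hTA2 : T2 ∈ A := by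
        rcases hy with ⟨T0, hT0, h⟩ | ⟨p, -, h⟩
        · exact (inl.inj h) ▸ hT0
        · exact absurd h inr_ne_inl
      rw [hAmem] at hTA1 hTA2
      have heq : subdiv T1 u v n = subdiv T2 u v n := hFxy
      have := congrArg (fun H => resAux H ⊔ SimpleGraph.fromEdgeSet {s(u, v)}) heq
      rw [res_subdiv_full hn ((SimpleGraph.mem_edgeSet _).mp hTA1.2.1),
        res_subdiv_full hn ((SimpleGraph.mem_edgeSet _).mp hTA2.2.1)] at this
      rw [this]
    · exfalso
      have heq : subdiv T1 u v n =
          (subdiv T2 u v n).deleteEdges {pE u v n ((j2 : ℕ))} := hFxy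
      have hmem : pE u v n (j2 : ℕ) ∈ (subdiv T1 u v n).edgeSet :=
        pE_mem_subdiv hn (by omega)
      rw [heq, SimpleGraph.edgeSet_deleteEdges] at hmem
      exact hmem.2 rfl
    · exfalso
      have heq : subdiv T2 u v n =
          (subdiv T1 u v n).deleteEdges {pE u v n ((j1 : ℕ))} := hFxy.symm
      have hmem : pE u v n (j1 : ℕ) ∈ (subdiv T2 u v n).edgeSet :=
        pE_mem_subdiv hn (by omega)
      rw [heq, SimpleGraph.edgeSet_deleteEdges] at hmem
      exact hmem.2 rfl
    · have hTB1 : T1 ∈ B := by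
        rcases hx with ⟨T0, -, h⟩ | ⟨p, hp, h⟩
        · exact absurd h inl_ne_inr
        · cases inr.inj h; exact hp.1
      have hTB2 : T2 ∈ B := by
        rcases hy with ⟨T0, -, h⟩ | ⟨p, hp, h⟩
        · exact absurd h inl_ne_inr
        · cases inr.inj h; exact hp.1
      rw [hBmem] at hTB1 hTB2
      have heq : (subdiv T1 u v n).deleteEdges {pE u v n ((j1 : ℕ))} =
          (subdiv T2 u v n).deleteEdges {pE u v n ((j2 : ℕ))} := hFxy
      have hT12 : T1 = T2 := by
        have := congrArg resAux heq
        rwa [res_subdiv_miss hn hTB1.2.1 (by omega : (j1 : ℕ) ≤ n),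
          res_subdiv_miss hn hTB2.2.1 (by omega : (j2 : ℕ) ≤ n)] at this
      have hj12 : j1 = j2 := by
        subst hT12
        by_contra hne
        have h1 : pE u v n (j1 : ℕ) ∈
            ((subdiv T1 u v n).deleteEdges {pE u v n ((j2 : ℕ))}).edgeSet := by
          rw [SimpleGraph.edgeSet_deleteEdges]
          refine ⟨pE_mem_subdiv hn (by omega), ?_⟩
          intro hc
          rw [Set.mem_singleton_iff] at hc
          exact hne (Fin.ext (pE_inj hu (by omega) (by omega) hc))
        rw [← heq, SimpleGraph.edgeSet_deleteEdges] at h1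
        exact h1.2 rfl
      rw [hT12, hj12]
  -- F surjects onto S'
  have himage : F '' D = S' := by
    apply Set.eq_of_subset_of_subset
    · rintro T' ⟨x, hx, rfl⟩
      exact hmaps x hx
    · intro T' hT'
      rw [hS'mem] at hT'
      obtain ⟨⟨hle, htree⟩, hk⟩ := hT'
      rcases classify σ hsign hn he hle htree with
        ⟨T, hTG, hTree, hTuv, heq, hpc⟩ | ⟨T, j₀, hTG, hTree, hne, heq, hpc⟩
      · refine ⟨inl T, Or.inl ⟨T, ?_, rfl⟩, heq⟩
        rw [hAmem]
        refine ⟨⟨hTG, hTree⟩, (SimpleGraph.mem_edgeSet _).mpr hTuv, ?_⟩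
        rw [hpc] at hk; push_cast at hk ⊢; omega
      · refine ⟨inr (T, j₀), Or.inr ⟨(T, j₀), ⟨?_, Set.mem_univ _⟩, rfl⟩, heq⟩
        rw [hBmem]
        refine ⟨⟨hTG, hTree⟩, hne, ?_⟩
        rw [hpc] at hk; push_cast at hk ⊢; omega
  -- count
  have hScard : S'.ncard = D.ncard := by
    rw [← himage, Set.ncard_image_of_injOn hinj]
  have hdisj : Disjoint (inl '' A)
      (inr '' (B ×ˢ (Set.univ : Set (Fin (n + 1))))) := by
    rw [Set.disjoint_left]
    rintro x ⟨T0, -, rfl⟩ ⟨p, -, h⟩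
    exact inr_ne_inl h
  have hDcard : D.ncard = A.ncard + (n + 1) * B.ncard := by
    rw [hD, Set.ncard_union_eq hdisj (Set.toFinite _) (Set.toFinite _),
      Set.ncard_image_of_injective _ Sum.inl_injective,
      Set.ncard_image_of_injective _ Sum.inr_injective]
    have : (B ×ˢ (Set.univ : Set (Fin (n + 1)))).ncard = B.ncard * (n + 1) := by
      rw [← Nat.card_coe_set_eq, Nat.card_congr (Equiv.Set.prod _ _),
        Nat.card_prod, Nat.card_congr (Equiv.Set.univ (Fin (n + 1))),
        show Nat.card (Fin (n + 1)) = n + 1 from by simp,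
        Nat.card_coe_set_eq]
    rw [this]
    ring
  rw [hScard, hDcard]
end

section
/- The total number of spanning trees of G^n equals the number of spanning trees of G containing e, plus (n+1) times the number of spanning trees of G not containing e. -/
open Sum

open SimpleGraph

section General

variable {X Y : Type*}

lemma reach_transfer {G : SimpleGraph X} {H : SimpleGraph Y} (f : X → Y)
    (h : ∀ a b, G.Adj a b → H.Reachable (f a) (f b)) {x y : X}
    (hxy : G.Reachable x y) : H.Reachable (f x) (f y) := by
  obtain ⟨w⟩ := hxy
  induction w with
  | nil => exact Reachable.refl _
  | cons ha _ ih => exact (h _ _ ha).trans ih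

lemma reach_invariant {G : SimpleGraph X} (P : X → Prop)
    (h : ∀ a b, G.Adj a b → (P a ↔ P b)) {x y : X}
    (hxy : G.Reachable x y) : P x ↔ P y := by
  obtain ⟨w⟩ := hxy
  induction w with
  | nil => rfl
  | cons ha _ ih => exact (h _ _ ha).trans ih

instance finite_simpleGraph [Finite X] : Finite (SimpleGraph X) := by
  have : Function.Injective (fun G : SimpleGraph X => G.Adj) := fun G H h => by
    ext a b; exact iff_of_eq (congrFun (congrFun h a) b)
  exact Finite.of_injective _ this

lemma isTree_ncard_edgeSet [Fintype X] {G : SimpleGraph X} (h : G.IsTree) :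
    G.edgeSet.ncard + 1 = Fintype.card X := by
  classical
  have : Fintype G.edgeSet := Fintype.ofFinite _
  rw [Set.ncard_eq_toFinset_card']
  have := h.card_edgeFinset
  rwa [edgeFinset, Set.toFinset_congr rfl] at this

lemma connected_sdiff_of_not_bridge {G : SimpleGraph X} (hc : G.Connected) {a b : X}
    (hab : G.Adj a b) (hbr : ¬ G.IsBridge s(a, b)) :
    (G \ fromEdgeSet {s(a, b)}).Connected := by
  have hne := hc.nonempty
  have hreach : (G \ fromEdgeSet {s(a, b)}).Reachable a b := by
    rw [isBridge_iff] at hbr; tauto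
  have key : ∀ x y, G.Adj x y → (G \ fromEdgeSet {s(a, b)}).Reachable x y := by
    intro x y hxy
    by_cases h : s(x, y) = s(a, b)
    · rw [Sym2.eq_iff] at h
      rcases h with ⟨rfl, rfl⟩ | ⟨rfl, rfl⟩
      · exact hreach
      · exact hreach.symm
    · refine Adj.reachable ?_
      simp only [sdiff_adj, fromEdgeSet_adj, Set.mem_singleton_iff]
      exact ⟨hxy, fun hh => h hh.1⟩
  exact ⟨fun x y => reach_transfer id (fun p q hpq => key p q hpq) (hc.preconnected x y)⟩

lemma exists_tree_le [Fintype X] :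
    ∀ (m : ℕ) (G : SimpleGraph X), G.edgeSet.ncard = m → G.Connected →
      ∃ T ≤ G, T.IsTree := by
  intro m
  induction m using Nat.strong_induction_on with
  | _ m ih =>
    intro G hm hc
    by_cases hac : G.IsAcyclic
    · exact ⟨G, le_refl _, hc, hac⟩
    · rw [isAcyclic_iff_forall_adj_isBridge] at hac
      push_neg at hac
      obtain ⟨a, b, hab, hbr⟩ := hac
      set G' := G \ fromEdgeSet {s(a, b)} with hG'
      have hconn : G'.Connected := connected_sdiff_of_not_bridge hc hab hbr
      have hEdge : G'.edgeSet = G.edgeSet \ {s(a, b)} := by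
        have h1 : ({s(a, b)} : Set (Sym2 X)) \ {e : Sym2 X | e.IsDiag} = {s(a, b)} := by
          ext e
          simp only [Set.mem_diff, Set.mem_singleton_iff, Set.mem_setOf_eq,
            and_iff_left_iff_imp]
          rintro rfl
          simp [hab.ne]
        rw [hG', edgeSet_sdiff, edgeSet_fromEdgeSet, Sym2.diagSet_eq_setOfPred_isDiag, h1]
      have hlt : G'.edgeSet.ncard < m := by
        rw [hEdge, ← hm]
        have hmem : s(a, b) ∈ G.edgeSet := hab
        have hfin : G.edgeSet.Finite := Set.toFinite _
        have := Set.ncard_diff_singleton_lt_of_mem hmem hfin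
        exact this
      obtain ⟨T, hle, hT⟩ := ih _ hlt G' rfl hconn
      exact ⟨T, le_trans hle sdiff_le, hT⟩

lemma isTree_of_connected_ncard [Fintype X] {G : SimpleGraph X} (hc : G.Connected)
    (hcard : G.edgeSet.ncard + 1 = Fintype.card X) : G.IsTree := by
  obtain ⟨T, hle, hT⟩ := exists_tree_le G.edgeSet.ncard G rfl hc
  have h1 : T.edgeSet.ncard + 1 = Fintype.card X := isTree_ncard_edgeSet hT
  have hsub : T.edgeSet ⊆ G.edgeSet := edgeSet_mono hle
  have : T.edgeSet = G.edgeSet :=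
    Set.eq_of_subset_of_ncard_le hsub (by omega) (Set.toFinite _)
  rwa [edgeSet_inj.mp this] at hT

lemma edge_le_iff' {G : SimpleGraph X} {a b : X} (h : G.Adj a b) : edge a b ≤ G := by
  intro x y hxy
  rw [edge_adj] at hxy
  rcases hxy.1 with ⟨rfl, rfl⟩ | ⟨rfl, rfl⟩
  · exact h
  · exact h.symm

lemma edgeSet_edge' {a b : X} (h : a ≠ b) : (edge a b).edgeSet = {s(a, b)} := by
  rw [edge, edgeSet_fromEdgeSet]
  ext e
  simp only [Set.mem_diff, Set.mem_singleton_iff, Set.mem_setOf_eq]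
  constructor
  · rintro ⟨rfl, -⟩; rfl
  · rintro rfl; exact ⟨rfl, by simp [h]⟩

lemma edgeSet_map' (f : X ↪ Y) (G : SimpleGraph X) :
    (G.map f).edgeSet = Sym2.map f '' G.edgeSet := by
  ext e
  induction e with
  | _ x y =>
    simp only [mem_edgeSet, map_adj, Set.mem_image]
    constructor
    · rintro ⟨a, b, hab, rfl, rfl⟩
      exact ⟨s(a, b), hab, rfl⟩
    · rintro ⟨e', he', hee⟩
      induction e' with
      | _ a b =>
        rw [Sym2.map_pair_eq, Sym2.eq_iff] at hee
        rcases hee with ⟨rfl, rfl⟩ | ⟨rfl, rfl⟩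
        · exact ⟨a, b, he', rfl, rfl⟩
        · exact ⟨b, a, he'.symm, rfl, rfl⟩

end General

section PathPart

variable {V : Type*} (u v : V) (n : ℕ)

/-- The path `u — w₀ — ⋯ — w_{n-1} — v`, restricted to those edges whose
index satisfies `K`. -/
def pathG (K : Fin (n+1) → Prop) : SimpleGraph (V ⊕ Fin n) :=
  SimpleGraph.fromRel fun a b =>
    match a, b with
    | inl a, inr i => (a = u ∧ (i : ℕ) = 0 ∧ K 0) ∨ (a = v ∧ (i : ℕ) = n - 1 ∧ K (Fin.last n))
    | inr i, inr j => (j : ℕ) = (i : ℕ) + 1 ∧ K (Fin.castSucc j)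
    | _, _ => False

/-- The `k`-th edge of the subdividing path. -/
def pathEdge (hn : 1 ≤ n) (k : Fin (n+1)) : Sym2 (V ⊕ Fin n) :=
  if (k : ℕ) = 0 then s(inl u, inr ⟨0, hn⟩)
  else if hk : (k : ℕ) = n then s(inl v, inr ⟨n - 1, by omega⟩)
  else s(inr ⟨(k : ℕ) - 1, by omega⟩, inr ⟨(k : ℕ), by
    have := k.isLt; omega⟩)

lemma pathEdge_cases (hn : 1 ≤ n) (k : Fin (n+1)) :
    ((k : ℕ) = 0 ∧ pathEdge u v n hn k = s(inl u, inr ⟨0, hn⟩)) ∨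
    ((k : ℕ) = n ∧ pathEdge u v n hn k = s(inl v, inr ⟨n - 1, by omega⟩)) ∨
    (∃ h : (k : ℕ) < n, 1 ≤ (k : ℕ) ∧
      pathEdge u v n hn k = s(inr ⟨(k : ℕ) - 1, by omega⟩, inr ⟨(k : ℕ), h⟩)) := by
  have hk := k.isLt
  rw [pathEdge]
  split_ifs with h1 h2
  · exact Or.inl ⟨h1, rfl⟩
  · exact Or.inr (Or.inl ⟨h2, rfl⟩)
  · exact Or.inr (Or.inr ⟨by omega, by omega, rfl⟩)

lemma pathG_not_adj_ll (K : Fin (n+1) → Prop) (a b : V) :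
    ¬ (pathG u v n K).Adj (inl a) (inl b) := by
  intro h
  rw [pathG, fromRel_adj] at h
  exact h.2.elim id id

lemma pathG_adj_li (hn : 1 ≤ n) (K : Fin (n+1) → Prop) (a : V) (i : Fin n) :
    (pathG u v n K).Adj (inl a) (inr i) ↔
      ∃ k, K k ∧ s(inl a, inr i) = pathEdge u v n hn k := by
  rw [pathG, fromRel_adj]
  constructor
  · rintro ⟨-, h | h⟩
    · rcases h with ⟨rfl, hi, hK⟩ | ⟨rfl, hi, hK⟩
      · refine ⟨0, hK, ?_⟩
        rw [pathEdge, if_pos (show ((0 : Fin (n+1)) : ℕ) = 0 from rfl), Sym2.eq_iff]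
        exact Or.inl ⟨rfl, congrArg inr (Fin.ext (by simp only [Fin.val_mk]; omega))⟩
      · refine ⟨Fin.last n, hK, ?_⟩
        rw [pathEdge, if_neg (by simp only [Fin.val_last]; omega),
          dif_pos (Fin.val_last n), Sym2.eq_iff]
        exact Or.inl ⟨rfl, congrArg inr (Fin.ext (by simp only [Fin.val_mk]; omega))⟩
    · exact absurd h id
  · rintro ⟨k, hK, hk⟩
    rcases pathEdge_cases u v n hn k with ⟨h0, he⟩ | ⟨h0, he⟩ | ⟨hlt, h1, he⟩
    · rw [he, Sym2.eq_iff] at hk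
      rcases hk with ⟨ha, hi⟩ | ⟨ha, hi⟩
      · rw [inl.injEq] at ha
        subst ha
        have hi' : (i : ℕ) = 0 := by
          rw [inr.injEq] at hi
          rw [hi, Fin.val_mk]
        have hk0 : k = 0 := Fin.ext h0
        subst hk0
        exact ⟨by simp, Or.inl (Or.inl ⟨rfl, hi', hK⟩)⟩
      · exact absurd ha (by simp)
    · rw [he, Sym2.eq_iff] at hk
      rcases hk with ⟨ha, hi⟩ | ⟨ha, hi⟩
      · rw [inl.injEq] at ha
        subst ha
        have hi' : (i : ℕ) = n - 1 := by
          rw [inr.injEq] at hi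
          rw [hi, Fin.val_mk]
        have hkl : k = Fin.last n := Fin.ext (by simpa using h0)
        subst hkl
        exact ⟨by simp, Or.inl (Or.inr ⟨rfl, hi', hK⟩)⟩
      · exact absurd ha (by simp)
    · rw [he, Sym2.eq_iff] at hk
      rcases hk with ⟨ha, -⟩ | ⟨ha, -⟩ <;> exact absurd ha (by simp)

lemma pathG_adj_rr (hn : 1 ≤ n) (K : Fin (n+1) → Prop) (i j : Fin n) :
    (pathG u v n K).Adj (inr i) (inr j) ↔
      ∃ k, K k ∧ s((inr i : V ⊕ Fin n), inr j) = pathEdge u v n hn k := by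
  rw [pathG, fromRel_adj]
  constructor
  · rintro ⟨hne, ⟨hj, hK⟩ | ⟨hi, hK⟩⟩
    · refine ⟨Fin.castSucc j, hK, ?_⟩
      have hv : ((Fin.castSucc j : Fin (n+1)) : ℕ) = (j : ℕ) := Fin.coe_castSucc j
      rcases pathEdge_cases u v n hn (Fin.castSucc j)
        with ⟨h0, he⟩ | ⟨h0, he⟩ | ⟨hlt, h1, he⟩
      · omega
      · have := j.isLt; omega
      · rw [he, Sym2.eq_iff]
        exact Or.inl
          ⟨congrArg inr (Fin.ext (by simp only [Fin.val_mk, Fin.coe_castSucc]; try omega)),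
           congrArg inr (Fin.ext (by simp only [Fin.val_mk, Fin.coe_castSucc]; try omega))⟩
    · refine ⟨Fin.castSucc i, hK, ?_⟩
      have hv : ((Fin.castSucc i : Fin (n+1)) : ℕ) = (i : ℕ) := Fin.coe_castSucc i
      rcases pathEdge_cases u v n hn (Fin.castSucc i)
        with ⟨h0, he⟩ | ⟨h0, he⟩ | ⟨hlt, h1, he⟩
      · omega
      · have := i.isLt; omega
      · rw [he, Sym2.eq_iff]
        exact Or.inr
          ⟨congrArg inr (Fin.ext (by simp only [Fin.val_mk, Fin.coe_castSucc]; try omega)),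
           congrArg inr (Fin.ext (by simp only [Fin.val_mk, Fin.coe_castSucc]; try omega))⟩
  · rintro ⟨k, hK, hk⟩
    rcases pathEdge_cases u v n hn k with ⟨h0, he⟩ | ⟨h0, he⟩ | ⟨hlt, h1, he⟩
    · rw [he, Sym2.eq_iff] at hk
      rcases hk with ⟨ha, -⟩ | ⟨-, ha⟩ <;> exact absurd ha (by simp)
    · rw [he, Sym2.eq_iff] at hk
      rcases hk with ⟨ha, -⟩ | ⟨-, ha⟩ <;> exact absurd ha (by simp)
    · rw [he, Sym2.eq_iff] at hk
      have hKc : K (Fin.castSucc ⟨(k : ℕ), hlt⟩) := by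
        have hck : Fin.castSucc ⟨(k : ℕ), hlt⟩ = k :=
          Fin.ext (by simp only [Fin.coe_castSucc, Fin.val_mk])
        rwa [hck]
      rcases hk with ⟨ha, hb⟩ | ⟨ha, hb⟩
      · rw [inr.injEq] at ha hb
        have hia : (i : ℕ) = (k : ℕ) - 1 := by rw [ha, Fin.val_mk]
        have hjb : (j : ℕ) = (k : ℕ) := by rw [hb, Fin.val_mk]
        refine ⟨by simp only [ne_eq, inr.injEq, Fin.ext_iff]; omega,
          Or.inl ⟨by omega, ?_⟩⟩
        have hcj : Fin.castSucc j = Fin.castSucc ⟨(k : ℕ), hlt⟩ :=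
          Fin.ext (by simp only [Fin.coe_castSucc, Fin.val_mk]; omega)
        rw [hcj]; exact hKc
      · rw [inr.injEq] at ha hb
        have hia : (i : ℕ) = (k : ℕ) := by rw [ha, Fin.val_mk]
        have hjb : (j : ℕ) = (k : ℕ) - 1 := by rw [hb, Fin.val_mk]
        refine ⟨by simp only [ne_eq, inr.injEq, Fin.ext_iff]; omega,
          Or.inr ⟨by omega, ?_⟩⟩
        have hci : Fin.castSucc i = Fin.castSucc ⟨(k : ℕ), hlt⟩ :=
          Fin.ext (by simp only [Fin.coe_castSucc, Fin.val_mk]; omega)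
        rw [hci]; exact hKc

lemma pathG_adj (hn : 1 ≤ n) (K : Fin (n+1) → Prop) (x y : V ⊕ Fin n) :
    (pathG u v n K).Adj x y ↔
      ∃ k, K k ∧ s(x, y) = pathEdge u v n hn k := by
  match x, y with
  | inl a, inl b =>
    simp only [pathG_not_adj_ll, false_iff, not_exists, not_and]
    intro k hK h
    rcases pathEdge_cases u v n hn k with ⟨-, he⟩ | ⟨-, he⟩ | ⟨hw, -, he⟩
    · rw [he, Sym2.eq_iff] at h
      rcases h with ⟨-, hb⟩ | ⟨hb, -⟩ <;> exact absurd hb (by simp)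
    · rw [he, Sym2.eq_iff] at h
      rcases h with ⟨-, hb⟩ | ⟨hb, -⟩ <;> exact absurd hb (by simp)
    · rw [he, Sym2.eq_iff] at h
      rcases h with ⟨hb, -⟩ | ⟨hb, -⟩ <;> exact absurd hb (by simp)
  | inl a, inr i => exact pathG_adj_li u v n hn K a i
  | inr i, inl a =>
    rw [adj_comm, Sym2.eq_swap (a := (inr i : V ⊕ Fin n))]
    exact pathG_adj_li u v n hn K a i
  | inr i, inr j => exact pathG_adj_rr u v n hn K i j

lemma pathG_edgeSet (hn : 1 ≤ n) (K : Fin (n+1) → Prop) :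
    (pathG u v n K).edgeSet = pathEdge u v n hn '' {k | K k} := by
  ext e
  induction e with
  | _ x y =>
    rw [mem_edgeSet, pathG_adj u v n hn]
    simp only [Set.mem_image, Set.mem_setOf_eq]
    constructor
    · rintro ⟨k, hK, hk⟩; exact ⟨k, hK, hk.symm⟩
    · rintro ⟨k, hK, hk⟩; exact ⟨k, hK, hk.symm⟩

lemma pathEdge_injective (huv : u ≠ v) (hn : 1 ≤ n) :
    Function.Injective (pathEdge u v n hn) := by
  intro k k' h
  rcases pathEdge_cases u v n hn k with ⟨h0, he⟩ | ⟨h0, he⟩ | ⟨hlt, h1, he⟩ <;>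
    rcases pathEdge_cases u v n hn k' with ⟨h0', he'⟩ | ⟨h0', he'⟩ | ⟨hlt', h1', he'⟩ <;>
      rw [he, he', Sym2.eq_iff] at h
  · exact Fin.ext (by omega)
  · rcases h with ⟨ha, -⟩ | ⟨-, ha⟩
    · exact absurd (by injection ha) huv
    · exact absurd ha (by simp)
  · rcases h with ⟨ha, -⟩ | ⟨ha, -⟩ <;> exact absurd ha (by simp)
  · rcases h with ⟨ha, -⟩ | ⟨-, ha⟩
    · exact absurd (by injection ha : v = u) huv.symm
    · exact absurd ha (by simp)
  · exact Fin.ext (by omega)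
  · rcases h with ⟨ha, -⟩ | ⟨ha, -⟩ <;> exact absurd ha (by simp)
  · rcases h with ⟨ha, -⟩ | ⟨-, ha⟩ <;> exact absurd ha (by simp)
  · rcases h with ⟨ha, -⟩ | ⟨-, ha⟩ <;> exact absurd ha (by simp)
  · rcases h with ⟨ha, hb⟩ | ⟨ha, hb⟩ <;> rw [inr.injEq, Fin.ext_iff] at ha hb <;>
      simp only [Fin.val_mk] at ha hb <;> exact Fin.ext (by omega)

lemma comap_pathG (K : Fin (n+1) → Prop) :
    SimpleGraph.comap inl (pathG u v n K) = (⊥ : SimpleGraph V) := by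
  ext a b
  simp only [comap_adj, bot_adj, iff_false]
  exact pathG_not_adj_ll u v n K a b

lemma pathG_reach_u (K : Fin (n+1) → Prop) (i : Fin n)
    (h : ∀ m : Fin (n+1), (m : ℕ) ≤ (i : ℕ) → K m) :
    (pathG u v n K).Reachable (inl u) (inr i) := by
  obtain ⟨m, hm⟩ : ∃ m, (i : ℕ) = m := ⟨_, rfl⟩
  induction m generalizing i with
  | zero =>
    refine Adj.reachable ?_
    rw [pathG, fromRel_adj]
    exact ⟨by simp, Or.inl (Or.inl ⟨rfl, hm, h 0 (by simp)⟩)⟩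
  | succ m ih =>
    have hin := i.isLt
    have hi' : (⟨m, by omega⟩ : Fin n).val = m := rfl
    refine (ih ⟨m, by omega⟩ (fun m' hm' => h m' (by simp only [Fin.val_mk] at hm' ⊢; omega))
      rfl).trans (Adj.reachable ?_)
    rw [pathG, fromRel_adj]
    refine ⟨by simp only [ne_eq, inr.injEq, Fin.ext_iff, Fin.val_mk]; omega,
      Or.inl ⟨by simp only [Fin.val_mk]; omega, h (Fin.castSucc i) (by
        simp only [Fin.coe_castSucc]; omega)⟩⟩

lemma pathG_reach_v (K : Fin (n+1) → Prop) (i : Fin n)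
    (h : ∀ m : Fin (n+1), (i : ℕ) < (m : ℕ) → K m) :
    (pathG u v n K).Reachable (inl v) (inr i) := by
  obtain ⟨d, hd⟩ : ∃ d, n - 1 - (i : ℕ) = d := ⟨_, rfl⟩
  have hin := i.isLt
  induction d generalizing i with
  | zero =>
    refine Adj.reachable ?_
    rw [pathG, fromRel_adj]
    refine ⟨by simp, Or.inl (Or.inr ⟨rfl, by omega, h (Fin.last n) (by
      simp only [Fin.val_last]; omega)⟩)⟩
  | succ d ih =>
    have hlt : (i : ℕ) + 1 < n := by omega
    have hreach := ih ⟨(i : ℕ) + 1, hlt⟩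
      (fun m' hm' => h m' (by simp only [Fin.val_mk] at hm'; omega))
      (by simp only [Fin.val_mk]; omega) hlt
    refine hreach.trans (Adj.reachable ?_)
    rw [pathG, fromRel_adj]
    refine ⟨by simp only [ne_eq, inr.injEq, Fin.ext_iff, Fin.val_mk]; try omega,
      Or.inr ⟨by simp only [Fin.val_mk]; try omega, h (Fin.castSucc ⟨(i : ℕ) + 1, hlt⟩) (by
        simp only [Fin.coe_castSucc, Fin.val_mk]; omega)⟩⟩

end PathPart

section SubdivLemmas

variable {V : Type*} (u v : V) (n : ℕ)

/-- The copy of a graph on `V` inside `V ⊕ Fin n`. -/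
def liftV (S : SimpleGraph V) : SimpleGraph (V ⊕ Fin n) :=
  S.map (⟨inl, inl_injective⟩ : V ↪ V ⊕ Fin n)

lemma liftV_adj (S : SimpleGraph V) (x y : V ⊕ Fin n) :
    (liftV n S).Adj x y ↔ ∃ a b, S.Adj a b ∧ inl a = x ∧ inl b = y :=
  map_adj _ _ _ _

lemma comap_liftV (S : SimpleGraph V) :
    SimpleGraph.comap inl (liftV n S) = S :=
  comap_map_eq ⟨inl, inl_injective⟩ S

lemma comap_sup (A B : SimpleGraph (V ⊕ Fin n)) :
    SimpleGraph.comap inl (A ⊔ B) =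
      SimpleGraph.comap inl A ⊔ SimpleGraph.comap inl B := by
  ext a b; simp

lemma sdiff_edge_adj (G : SimpleGraph V) (a b : V) :
    (G \ edge u v).Adj a b ↔ G.Adj a b ∧ s(a, b) ≠ s(u, v) := by
  rw [sdiff_adj, edge_adj]
  constructor
  · rintro ⟨h1, h2⟩
    refine ⟨h1, fun hs => h2 ?_⟩
    rw [Sym2.eq_iff] at hs
    exact ⟨hs, h1.ne⟩
  · rintro ⟨h1, h2⟩
    refine ⟨h1, fun hc => h2 ?_⟩
    rw [Sym2.eq_iff]
    exact hc.1

lemma subdiv_eq (G : SimpleGraph V) :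
    subdiv G u v n = liftV n (G \ edge u v) ⊔ pathG u v n (fun _ => True) := by
  ext x y
  rw [sup_adj, subdiv, fromRel_adj]
  match x, y with
  | inl a, inl b =>
    constructor
    · rintro ⟨hne, ⟨hadj, hne'⟩ | ⟨hadj, hne'⟩⟩
      · exact Or.inl ((liftV_adj n _ _ _).mpr
          ⟨a, b, (sdiff_edge_adj u v _ a b).mpr ⟨hadj, hne'⟩, rfl, rfl⟩)
      · refine Or.inl ((liftV_adj n _ _ _).mpr
          ⟨a, b, (sdiff_edge_adj u v _ a b).mpr ⟨hadj.symm, fun hs => hne' ?_⟩, rfl, rfl⟩)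
        rw [Sym2.eq_swap (a := b)]; exact hs
    · rintro (h | h)
      · rw [liftV_adj] at h
        obtain ⟨a', b', hab, ha, hb⟩ := h
        rw [inl.injEq] at ha hb
        subst ha; subst hb
        rw [sdiff_edge_adj] at hab
        exact ⟨by simp [hab.1.ne], Or.inl ⟨hab.1, hab.2⟩⟩
      · exact absurd h (pathG_not_adj_ll u v n _ a b)
  | inl a, inr i =>
    constructor
    · rintro ⟨hne, h | h⟩
      · refine Or.inr ?_
        rw [pathG, fromRel_adj]
        rcases h with ⟨ha, hi⟩ | ⟨ha, hi⟩
        · exact ⟨hne, Or.inl (Or.inl ⟨ha, hi, trivial⟩)⟩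
        · exact ⟨hne, Or.inl (Or.inr ⟨ha, hi, trivial⟩)⟩
      · exact absurd h id
    · rintro (h | h)
      · rw [liftV_adj] at h
        obtain ⟨a', b', -, -, hb⟩ := h
        exact absurd hb (by simp)
      · rw [pathG, fromRel_adj] at h
        obtain ⟨hne, h | h⟩ := h
        · rcases h with ⟨ha, hi, -⟩ | ⟨ha, hi, -⟩
          · exact ⟨hne, Or.inl (Or.inl ⟨ha, hi⟩)⟩
          · exact ⟨hne, Or.inl (Or.inr ⟨ha, hi⟩)⟩
        · exact absurd h id
  | inr i, inl a =>
    constructor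
    · rintro ⟨hne, h | h⟩
      · exact absurd h id
      · refine Or.inr ?_
        rw [pathG, fromRel_adj]
        rcases h with ⟨ha, hi⟩ | ⟨ha, hi⟩
        · exact ⟨hne, Or.inr (Or.inl ⟨ha, hi, trivial⟩)⟩
        · exact ⟨hne, Or.inr (Or.inr ⟨ha, hi, trivial⟩)⟩
    · rintro (h | h)
      · rw [liftV_adj] at h
        obtain ⟨a', b', -, ha, -⟩ := h
        exact absurd ha (by simp)
      · rw [pathG, fromRel_adj] at h
        obtain ⟨hne, h | h⟩ := h
        · exact absurd h id
        · rcases h with ⟨ha, hi, -⟩ | ⟨ha, hi, -⟩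
          · exact ⟨hne, Or.inr (Or.inl ⟨ha, hi⟩)⟩
          · exact ⟨hne, Or.inr (Or.inr ⟨ha, hi⟩)⟩
  | inr i, inr j =>
    constructor
    · rintro ⟨hne, h | h⟩
      · refine Or.inr ?_
        rw [pathG, fromRel_adj]
        exact ⟨hne, Or.inl ⟨h, trivial⟩⟩
      · refine Or.inr ?_
        rw [pathG, fromRel_adj]
        exact ⟨hne, Or.inr ⟨h, trivial⟩⟩
    · rintro (h | h)
      · rw [liftV_adj] at h
        obtain ⟨a', b', -, ha, -⟩ := h
        exact absurd ha (by simp)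
      · rw [pathG, fromRel_adj] at h
        obtain ⟨hne, ⟨h, -⟩ | ⟨h, -⟩⟩ := h
        · exact ⟨hne, Or.inl h⟩
        · exact ⟨hne, Or.inr h⟩

lemma comap_subdiv (G : SimpleGraph V) :
    SimpleGraph.comap inl (subdiv G u v n) = G \ edge u v := by
  rw [subdiv_eq, comap_sup, comap_liftV, comap_pathG, sup_bot_eq]

lemma pathEdge_ne_lift (hn : 1 ≤ n) (S : SimpleGraph V) (k : Fin (n+1)) :
    pathEdge u v n hn k ∉ (liftV n S).edgeSet := by
  intro h
  rw [liftV, edgeSet_map'] at h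
  obtain ⟨e', -, he⟩ := h
  induction e' with
  | _ a b =>
    rw [Sym2.map_pair_eq] at he
    rcases pathEdge_cases u v n hn k with ⟨-, hc⟩ | ⟨-, hc⟩ | ⟨hw, -, hc⟩ <;>
      rw [hc, Sym2.eq_iff] at he <;>
      rcases he with ⟨-, hb⟩ | ⟨hb, -⟩ <;> exact absurd hb (by simp)

lemma edgeSet_disj (hn : 1 ≤ n) (S : SimpleGraph V) (K : Fin (n+1) → Prop) :
    Disjoint (liftV n S).edgeSet (pathG u v n K).edgeSet := by
  rw [Set.disjoint_right, pathG_edgeSet u v n hn]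
  rintro e ⟨k, -, rfl⟩
  exact pathEdge_ne_lift u v n hn S k

lemma ncard_edgeSet_lift_sup_path [Fintype V] (huv : u ≠ v) (hn : 1 ≤ n)
    (S : SimpleGraph V) (K : Fin (n+1) → Prop) :
    (liftV n S ⊔ pathG u v n K).edgeSet.ncard =
      S.edgeSet.ncard + {k | K k}.ncard := by
  rw [edgeSet_sup,
    Set.ncard_union_eq (edgeSet_disj u v n hn S K) (Set.toFinite _) (Set.toFinite _)]
  congr 1
  · rw [liftV, edgeSet_map']
    exact Set.ncard_image_of_injective _ (Sym2.map.injective inl_injective)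
  · rw [pathG_edgeSet u v n hn]
    exact Set.ncard_image_of_injective _ (pathEdge_injective u v n huv hn)

lemma structure_lemma (hn : 1 ≤ n) (G : SimpleGraph V) {T : SimpleGraph (V ⊕ Fin n)}
    (hT : T ≤ subdiv G u v n) :
    T = liftV n (SimpleGraph.comap inl T) ⊔
      pathG u v n (fun k => pathEdge u v n hn k ∈ T.edgeSet) := by
  apply le_antisymm
  · intro x y hxy
    have h2 := hT hxy
    rw [subdiv_eq, sup_adj] at h2
    rcases h2 with h2 | h2
    · rw [liftV_adj] at h2
      obtain ⟨a, b, -, ha, hb⟩ := h2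
      subst ha; subst hb
      exact Or.inl ((liftV_adj n _ _ _).mpr ⟨a, b, hxy, rfl, rfl⟩)
    · rw [pathG_adj u v n hn] at h2
      obtain ⟨k, -, hk⟩ := h2
      refine Or.inr ((pathG_adj u v n hn _ x y).mpr ⟨k, ?_, hk⟩)
      rw [← hk]
      exact hxy
  · refine sup_le ?_ ?_
    · rw [liftV, map_le_iff_le_comap]
      exact le_refl _
    · intro x y hxy
      rw [pathG_adj u v n hn] at hxy
      obtain ⟨k, hK, hk⟩ := hxy
      have : s(x, y) ∈ T.edgeSet := by rw [hk]; exact hK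
      exact this

lemma at_most_one_missing_s1 (hn : 1 ≤ n) (G : SimpleGraph V) {T : SimpleGraph (V ⊕ Fin n)}
    (hTle : T ≤ subdiv G u v n) (hTc : T.Connected) {j k : Fin (n+1)}
    (hjk : (j : ℕ) < (k : ℕ)) (hj : pathEdge u v n hn j ∉ T.edgeSet)
    (hk : pathEdge u v n hn k ∉ T.edgeSet) : False := by
  have hkn := k.isLt
  have hinv : ∀ x y, T.Adj x y →
      ((fun x => match x with
        | inl _ => False
        | inr i => (j : ℕ) ≤ (i : ℕ) ∧ (i : ℕ) < (k : ℕ)) x ↔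
       (fun x => match x with
        | inl _ => False
        | inr i => (j : ℕ) ≤ (i : ℕ) ∧ (i : ℕ) < (k : ℕ)) y) := by
    intro x y hxy
    have h2 := hTle hxy
    rw [subdiv_eq, sup_adj] at h2
    rcases h2 with h2 | h2
    · rw [liftV_adj] at h2
      obtain ⟨a, b, -, ha, hb⟩ := h2
      subst ha; subst hb
      exact Iff.rfl
    · rw [pathG_adj u v n hn] at h2
      obtain ⟨m, -, hm⟩ := h2
      have hmem : pathEdge u v n hn m ∈ T.edgeSet := by rw [← hm]; exact hxy
      have hmj : (m : ℕ) ≠ (j : ℕ) := fun hc => hj (by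
        have hmj' : m = j := Fin.ext hc
        rwa [hmj'] at hmem)
      have hmk : (m : ℕ) ≠ (k : ℕ) := fun hc => hk (by
        have hmk' : m = k := Fin.ext hc
        rwa [hmk'] at hmem)
      rcases pathEdge_cases u v n hn m with ⟨h0, hc⟩ | ⟨h0, hc⟩ | ⟨hlt, h1, hc⟩ <;>
        rw [hc, Sym2.eq_iff] at hm
      · have hP0 : ¬ ((j : ℕ) ≤ 0 ∧ (0 : ℕ) < (k : ℕ)) := by omega
        rcases hm with ⟨hx, hy⟩ | ⟨hx, hy⟩ <;> subst hx <;> subst hy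
        · exact iff_of_false (fun hc => hc) (fun hc => hP0 hc)
        · exact iff_of_false (fun hc => hP0 hc) (fun hc => hc)
      · have hP1 : ¬ ((j : ℕ) ≤ n - 1 ∧ n - 1 < (k : ℕ)) := by omega
        rcases hm with ⟨hx, hy⟩ | ⟨hx, hy⟩ <;> subst hx <;> subst hy
        · exact iff_of_false (fun hc => hc) (fun hc => hP1 hc)
        · exact iff_of_false (fun hc => hP1 hc) (fun hc => hc)
      · have hPiff : ((j : ℕ) ≤ (m : ℕ) - 1 ∧ (m : ℕ) - 1 < (k : ℕ)) ↔
            ((j : ℕ) ≤ (m : ℕ) ∧ (m : ℕ) < (k : ℕ)) := by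
          constructor <;> intro hh <;> constructor <;> omega
        rcases hm with ⟨hx, hy⟩ | ⟨hx, hy⟩ <;> subst hx <;> subst hy
        · exact hPiff
        · exact hPiff.symm
  have hjn : (j : ℕ) < n := by omega
  have hiff := reach_invariant _ hinv (hTc.preconnected (inl u) (inr ⟨(j : ℕ), hjn⟩))
  exact (hiff.mpr ⟨le_refl _, hjk⟩).elim

lemma pathG_congr {K K' : Fin (n+1) → Prop} (h : ∀ k, K k ↔ K' k) :
    pathG u v n K = pathG u v n K' := by
  have hKK : K = K' := funext fun k => propext (h k)
  rw [hKK]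

lemma pathG_mono (hn : 1 ≤ n) {K K' : Fin (n+1) → Prop} (h : ∀ k, K k → K' k) :
    pathG u v n K ≤ pathG u v n K' := by
  intro x y hxy
  rw [pathG_adj u v n hn] at hxy ⊢
  obtain ⟨m, hK, hm⟩ := hxy
  exact ⟨m, h m hK, hm⟩

lemma connected_back_full (hn : 1 ≤ n) {S : SimpleGraph V} (hS : S.Connected) :
    (liftV n (S \ edge u v) ⊔ pathG u v n (fun _ => True)).Connected := by
  set T := liftV n (S \ edge u v) ⊔ pathG u v n (fun _ => True) with hT
  have hpath : pathG u v n (fun _ => True) ≤ T := le_sup_right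
  have huvpath : T.Reachable (inl u) (inl v) := by
    have h1 := pathG_reach_u u v n (fun _ => True) ⟨n - 1, by omega⟩ (fun m _ => trivial)
    have h2 := pathG_reach_v u v n (fun _ => True) ⟨n - 1, by omega⟩ (fun m _ => trivial)
    exact ((h1.mono hpath).trans (h2.mono hpath).symm)
  have key : ∀ a b, S.Adj a b → T.Reachable (inl a) (inl b) := by
    intro a b hab
    by_cases hs : s(a, b) = s(u, v)
    · rw [Sym2.eq_iff] at hs
      rcases hs with ⟨rfl, rfl⟩ | ⟨rfl, rfl⟩
      · exact huvpath
      · exact huvpath.symm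
    · refine Adj.reachable (le_sup_left (b := pathG u v n (fun _ => True)) ?_)
      exact (liftV_adj n _ _ _).mpr ⟨a, b, (sdiff_edge_adj u v S a b).mpr ⟨hab, hs⟩, rfl, rfl⟩
  have hto : ∀ x, T.Reachable x (inl u) := by
    intro x
    match x with
    | inl a => exact reach_transfer inl key (hS.preconnected a u)
    | inr i => exact ((pathG_reach_u u v n (fun _ => True) i (fun _ _ => trivial)).mono
        hpath).symm
  have : Nonempty (V ⊕ Fin n) := ⟨inr ⟨0, hn⟩⟩
  exact ⟨fun x y => (hto x).trans (hto y).symm⟩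

lemma connected_back_miss (hn : 1 ≤ n) {S : SimpleGraph V} (hS : S.Connected)
    (k : Fin (n+1)) :
    (liftV n S ⊔ pathG u v n (fun j => j ≠ k)).Connected := by
  set T := liftV n S ⊔ pathG u v n (fun j => j ≠ k) with hT
  have hpath : pathG u v n (fun j => j ≠ k) ≤ T := le_sup_right
  have key : ∀ a b, S.Adj a b → T.Reachable (inl a) (inl b) := by
    intro a b hab
    exact Adj.reachable (le_sup_left (b := pathG u v n (fun j => j ≠ k))
      ((liftV_adj n _ _ _).mpr ⟨a, b, hab, rfl, rfl⟩))
  have hlift : ∀ a b, S.Reachable a b → T.Reachable (inl a) (inl b) :=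
    fun a b h => reach_transfer inl key h
  have hto : ∀ x, T.Reachable x (inl u) := by
    intro x
    match x with
    | inl a => exact hlift a u (hS.preconnected a u)
    | inr i =>
      by_cases hik : (i : ℕ) < (k : ℕ)
      · refine ((pathG_reach_u u v n _ i (fun m hm => ?_)).mono hpath).symm
        intro hc; subst hc; omega
      · have h1 : T.Reachable (inl v) (inr i) :=
          (pathG_reach_v u v n _ i (fun m hm => by intro hc; subst hc; omega)).mono hpath
        exact h1.symm.trans (hlift v u (hS.preconnected v u))
  have : Nonempty (V ⊕ Fin n) := ⟨inr ⟨0, hn⟩⟩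
  exact ⟨fun x y => (hto x).trans (hto y).symm⟩

lemma connected_fwd_full (hn : 1 ≤ n) (huv : u ≠ v) (hNe : Nonempty V)
    (G : SimpleGraph V) {T : SimpleGraph (V ⊕ Fin n)}
    (hTle : T ≤ subdiv G u v n) (hTc : T.Connected) :
    (SimpleGraph.comap inl T ⊔ edge u v).Connected := by
  set R := SimpleGraph.comap inl T ⊔ edge u v with hR
  set f : V ⊕ Fin n → V := Sum.elim id (fun _ => u) with hf
  have key : ∀ x y, T.Adj x y → R.Reachable (f x) (f y) := by
    intro x y hxy
    have h2 := hTle hxy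
    rw [subdiv_eq, sup_adj] at h2
    rcases h2 with h2 | h2
    · rw [liftV_adj] at h2
      obtain ⟨a, b, -, ha, hb⟩ := h2
      subst ha; subst hb
      exact Adj.reachable (Or.inl hxy)
    · rw [pathG_adj u v n hn] at h2
      obtain ⟨m, -, hm⟩ := h2
      rcases pathEdge_cases u v n hn m with ⟨h0, hc⟩ | ⟨h0, hc⟩ | ⟨hlt, h1, hc⟩ <;>
        rw [hc, Sym2.eq_iff] at hm
      · rcases hm with ⟨hx, hy⟩ | ⟨hx, hy⟩ <;> subst hx <;> subst hy <;>
          exact Reachable.refl _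
      · have hvu : R.Reachable v u :=
          Adj.reachable (Or.inr (by rw [edge_adj]; exact ⟨Or.inr ⟨rfl, rfl⟩, huv.symm⟩))
        rcases hm with ⟨hx, hy⟩ | ⟨hx, hy⟩ <;> subst hx <;> subst hy
        · exact hvu
        · exact hvu.symm
      · rcases hm with ⟨hx, hy⟩ | ⟨hx, hy⟩ <;> subst hx <;> subst hy <;>
          exact Reachable.refl _
  refine ⟨fun a b => ?_⟩
  have := reach_transfer f key (hTc.preconnected (inl a) (inl b))
  simpa [hf] using this

lemma connected_fwd_miss (hn : 1 ≤ n) (hNe : Nonempty V)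
    (G : SimpleGraph V) {T : SimpleGraph (V ⊕ Fin n)}
    (hTle : T ≤ subdiv G u v n) (hTc : T.Connected) (k : Fin (n+1))
    (hk : pathEdge u v n hn k ∉ T.edgeSet) :
    (SimpleGraph.comap inl T).Connected := by
  set R := SimpleGraph.comap (inl : V → V ⊕ Fin n) T with hR
  set f : V ⊕ Fin n → V :=
    Sum.elim id (fun i => if (i : ℕ) < (k : ℕ) then u else v) with hf
  have key : ∀ x y, T.Adj x y → R.Reachable (f x) (f y) := by
    intro x y hxy
    have h2 := hTle hxy
    rw [subdiv_eq, sup_adj] at h2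
    rcases h2 with h2 | h2
    · rw [liftV_adj] at h2
      obtain ⟨a, b, -, ha, hb⟩ := h2
      subst ha; subst hb
      exact Adj.reachable hxy
    · rw [pathG_adj u v n hn] at h2
      obtain ⟨m, -, hm⟩ := h2
      have hmem : pathEdge u v n hn m ∈ T.edgeSet := by rw [← hm]; exact hxy
      have hmk : (m : ℕ) ≠ (k : ℕ) := by
        intro hc
        exact hk (by rwa [Fin.ext hc] at hmem)
      have hkn := k.isLt
      rcases pathEdge_cases u v n hn m with ⟨h0, hc⟩ | ⟨h0, hc⟩ | ⟨hlt, h1, hc⟩ <;>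
        rw [hc, Sym2.eq_iff] at hm
      · have hfeq : f (inr ⟨0, hn⟩) = u := by
          rw [hf]; simp only [Sum.elim_inr]
          exact if_pos (show ((⟨0, hn⟩ : Fin n) : ℕ) < (k : ℕ) from by
            show (0 : ℕ) < (k : ℕ); omega)
        rcases hm with ⟨hx, hy⟩ | ⟨hx, hy⟩ <;> subst hx <;> subst hy <;> rw [hfeq] <;>
          exact Reachable.refl _
      · have hfeq : f (inr ⟨n - 1, by omega⟩) = v := by
          rw [hf]; simp only [Sum.elim_inr]
          exact if_neg (show ¬ ((⟨n - 1, by omega⟩ : Fin n) : ℕ) < (k : ℕ) from by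
            show ¬ (n - 1 : ℕ) < (k : ℕ); omega)
        rcases hm with ⟨hx, hy⟩ | ⟨hx, hy⟩ <;> subst hx <;> subst hy <;> rw [hfeq] <;>
          exact Reachable.refl _
      · have hfeq : f (inr ⟨(m : ℕ) - 1, by omega⟩) = f (inr ⟨(m : ℕ), hlt⟩) := by
          rw [hf]; simp only [Sum.elim_inr, Fin.val_mk]
          split_ifs <;> first | rfl | omega
        rcases hm with ⟨hx, hy⟩ | ⟨hx, hy⟩ <;> subst hx <;> subst hy <;> rw [hfeq]
  refine ⟨fun a b => ?_⟩
  have := reach_transfer f key (hTc.preconnected (inl a) (inl b))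
  simpa [hf] using this

lemma le_sdiff_edge {S G : SimpleGraph V} (hSG : S ≤ G)
    (hmem : s(u, v) ∉ S.edgeSet) : S ≤ G \ edge u v := by
  intro a b hab
  rw [sdiff_edge_adj]
  refine ⟨hSG hab, fun hs => hmem ?_⟩
  rw [← hs]
  exact hab

lemma mem_spanningTrees_iff {X : Type*} (H T : SimpleGraph X) :
    T ∈ spanningTrees H ↔ T ≤ H ∧ T.IsTree := Iff.rfl

lemma ncard_setOf_true : ({k | True} : Set (Fin (n+1))).ncard = n + 1 := by
  have : ({k | True} : Set (Fin (n+1))) = Set.univ := by ext; simp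
  rw [this, Set.ncard_univ, Nat.card_eq_fintype_card, Fintype.card_fin]

lemma ncard_setOf_ne (k : Fin (n+1)) :
    ({j | j ≠ k} : Set (Fin (n+1))).ncard = n := by
  have : ({j | j ≠ k} : Set (Fin (n+1))) = Set.univ \ {k} := by ext; simp
  rw [this, Set.ncard_diff (by simp) (Set.toFinite _), Set.ncard_univ,
    Nat.card_eq_fintype_card, Fintype.card_fin, Set.ncard_singleton]
  omega

lemma ncard_full_piece [Fintype V] {G : SimpleGraph V} (hG : G.Connected)
    (he : G.Adj u v) (hn : 1 ≤ n) :
    ({T | T ∈ spanningTrees (subdiv G u v n) ∧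
        ∀ j, pathEdge u v n hn j ∈ T.edgeSet} : Set (SimpleGraph (V ⊕ Fin n))).ncard =
      {T ∈ spanningTrees G | s(u, v) ∈ T.edgeSet}.ncard := by
  classical
  have huv : u ≠ v := he.ne
  have hNe : Nonempty V := hG.nonempty
  have hcards : Fintype.card (V ⊕ Fin n) = Fintype.card V + n := by
    simp [Fintype.card_sum]
  have hV2 : 2 ≤ Fintype.card V := Fintype.one_lt_card_iff_nontrivial.mpr ⟨⟨u, v, huv⟩⟩
  set Afull : Set (SimpleGraph (V ⊕ Fin n)) :=
    {T | T ∈ spanningTrees (subdiv G u v n) ∧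
      ∀ j, pathEdge u v n hn j ∈ T.edgeSet} with hAfull
  set f : SimpleGraph (V ⊕ Fin n) → SimpleGraph V :=
    fun T => SimpleGraph.comap inl T ⊔ edge u v with hfdef
  -- basic facts for each T ∈ Afull
  have hfacts : ∀ T ∈ Afull,
      T = liftV n (SimpleGraph.comap inl T) ⊔ pathG u v n (fun _ => True) ∧
      SimpleGraph.comap inl T ≤ G \ edge u v ∧
      (SimpleGraph.comap inl T).edgeSet.ncard + 2 = Fintype.card V ∧
      s(u, v) ∉ (SimpleGraph.comap inl T).edgeSet := by
    rintro T ⟨⟨hTle, hTtree⟩, hTall⟩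
    have hstruct := structure_lemma u v n hn G hTle
    have hcongr : pathG u v n (fun k => pathEdge u v n hn k ∈ T.edgeSet) =
        pathG u v n (fun _ => True) :=
      pathG_congr u v n (fun k => iff_of_true (hTall k) trivial)
    rw [hcongr] at hstruct
    have hRle : SimpleGraph.comap inl T ≤ G \ edge u v := by
      have h2 : SimpleGraph.comap inl T ≤ SimpleGraph.comap inl (subdiv G u v n) :=
        fun a b hab => hTle hab
      rwa [comap_subdiv] at h2
    have hTE : T.edgeSet.ncard = (SimpleGraph.comap inl T).edgeSet.ncard + (n + 1) := by
      conv_lhs => rw [hstruct]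
      rw [ncard_edgeSet_lift_sup_path u v n huv hn, ncard_setOf_true]
    have htc := isTree_ncard_edgeSet hTtree
    refine ⟨hstruct, hRle, by omega, fun hmem => ?_⟩
    have : (G \ edge u v).Adj u v := hRle hmem
    rw [sdiff_edge_adj] at this
    exact this.2 rfl
  have hinj : Set.InjOn f Afull := by
    intro T1 h1 T2 h2 hf12
    obtain ⟨hs1, hle1, -, hne1⟩ := hfacts T1 h1
    obtain ⟨hs2, hle2, -, hne2⟩ := hfacts T2 h2
    have hd1 : Disjoint (SimpleGraph.comap inl T1) (edge u v) := by
      rw [← disjoint_edgeSet, edgeSet_edge' huv, Set.disjoint_singleton_right]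
      exact hne1
    have hd2 : Disjoint (SimpleGraph.comap inl T2) (edge u v) := by
      rw [← disjoint_edgeSet, edgeSet_edge' huv, Set.disjoint_singleton_right]
      exact hne2
    have hR : SimpleGraph.comap inl T1 = SimpleGraph.comap inl T2 := by
      rw [← hd1.sup_sdiff_cancel_right, ← hd2.sup_sdiff_cancel_right]
      exact congrArg (· \ edge u v) hf12
    rw [hs1, hs2, hR]
  have himg : f '' Afull = {T ∈ spanningTrees G | s(u, v) ∈ T.edgeSet} := by
    ext S
    constructor
    · rintro ⟨T, hT, rfl⟩
      obtain ⟨hstruct, hRle, hRcard, hRne⟩ := hfacts T hT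
      obtain ⟨⟨hTle, hTtree⟩, hTall⟩ := hT
      have hconn : (f T).Connected :=
        connected_fwd_full u v n hn huv hNe G hTle hTtree.isConnected
      have hcard : (f T).edgeSet.ncard + 1 = Fintype.card V := by
        rw [hfdef]
        simp only []
        rw [edgeSet_sup, edgeSet_edge' huv,
          Set.ncard_union_eq (by rw [Set.disjoint_singleton_right]; exact hRne)
            (Set.toFinite _) (Set.toFinite _), Set.ncard_singleton]
        omega
      refine ⟨⟨?_, isTree_of_connected_ncard hconn hcard⟩, ?_⟩
      · exact sup_le (hRle.trans sdiff_le) (edge_le_iff' he)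
      · have : (f T).Adj u v := Or.inr (by rw [edge_adj]; exact ⟨Or.inl ⟨rfl, rfl⟩, huv⟩)
        exact this
    · rintro ⟨⟨hSle, hStree⟩, hSe⟩
      have hSconn := hStree.isConnected
      have hSadj : S.Adj u v := hSe
      refine ⟨liftV n (S \ edge u v) ⊔ pathG u v n (fun _ => True), ⟨⟨?_, ?_⟩, ?_⟩, ?_⟩
      · rw [subdiv_eq]
        exact sup_le_sup (map_monotone _ (sdiff_le_sdiff_right hSle)) le_rfl
      · refine isTree_of_connected_ncard (connected_back_full u v n hn hSconn) ?_
        rw [ncard_edgeSet_lift_sup_path u v n huv hn, ncard_setOf_true, edgeSet_sdiff,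
          edgeSet_edge' huv, Set.ncard_diff_singleton_of_mem hSe]
        have := isTree_ncard_edgeSet hStree
        omega
      · intro j
        rw [edgeSet_sup]
        refine Or.inr ?_
        rw [pathG_edgeSet u v n hn]
        exact ⟨j, trivial, rfl⟩
      · rw [hfdef]
        simp only []
        rw [comap_sup, comap_liftV, comap_pathG, sup_bot_eq,
          sdiff_sup_cancel (edge_le_iff' hSadj)]
  rw [← himg, Set.ncard_image_of_injOn hinj]

lemma ncard_miss_piece [Fintype V] {G : SimpleGraph V} (hG : G.Connected)
    (he : G.Adj u v) (hn : 1 ≤ n) (k : Fin (n+1)) :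
    ({T | T ∈ spanningTrees (subdiv G u v n) ∧
        ∀ j, pathEdge u v n hn j ∈ T.edgeSet ↔ j ≠ k} :
          Set (SimpleGraph (V ⊕ Fin n))).ncard =
      {T ∈ spanningTrees G | s(u, v) ∉ T.edgeSet}.ncard := by
  classical
  have huv : u ≠ v := he.ne
  have hNe : Nonempty V := hG.nonempty
  have hcards : Fintype.card (V ⊕ Fin n) = Fintype.card V + n := by
    simp [Fintype.card_sum]
  have hV2 : 2 ≤ Fintype.card V := Fintype.one_lt_card_iff_nontrivial.mpr ⟨⟨u, v, huv⟩⟩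
  set Ak : Set (SimpleGraph (V ⊕ Fin n)) :=
    {T | T ∈ spanningTrees (subdiv G u v n) ∧
      ∀ j, pathEdge u v n hn j ∈ T.edgeSet ↔ j ≠ k} with hAk
  set f : SimpleGraph (V ⊕ Fin n) → SimpleGraph V :=
    fun T => SimpleGraph.comap inl T with hfdef
  have hfacts : ∀ T ∈ Ak,
      T = liftV n (SimpleGraph.comap inl T) ⊔ pathG u v n (fun j => j ≠ k) ∧
      SimpleGraph.comap inl T ≤ G \ edge u v ∧
      (SimpleGraph.comap inl T).edgeSet.ncard + 1 = Fintype.card V ∧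
      s(u, v) ∉ (SimpleGraph.comap inl T).edgeSet := by
    rintro T ⟨⟨hTle, hTtree⟩, hTiff⟩
    have hstruct := structure_lemma u v n hn G hTle
    have hcongr : pathG u v n (fun j => pathEdge u v n hn j ∈ T.edgeSet) =
        pathG u v n (fun j => j ≠ k) := pathG_congr u v n hTiff
    rw [hcongr] at hstruct
    have hRle : SimpleGraph.comap inl T ≤ G \ edge u v := by
      have h2 : SimpleGraph.comap inl T ≤ SimpleGraph.comap inl (subdiv G u v n) :=
        fun a b hab => hTle hab
      rwa [comap_subdiv] at h2
    have hTE : T.edgeSet.ncard = (SimpleGraph.comap inl T).edgeSet.ncard + n := by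
      conv_lhs => rw [hstruct]
      rw [ncard_edgeSet_lift_sup_path u v n huv hn, ncard_setOf_ne]
    have htc := isTree_ncard_edgeSet hTtree
    refine ⟨hstruct, hRle, by omega, fun hmem => ?_⟩
    have : (G \ edge u v).Adj u v := hRle hmem
    rw [sdiff_edge_adj] at this
    exact this.2 rfl
  have hinj : Set.InjOn f Ak := by
    intro T1 h1 T2 h2 hf12
    obtain ⟨hs1, -, -, -⟩ := hfacts T1 h1
    obtain ⟨hs2, -, -, -⟩ := hfacts T2 h2
    have hR : SimpleGraph.comap inl T1 = SimpleGraph.comap inl T2 := hf12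
    rw [hs1, hs2, hR]
  have himg : f '' Ak = {T ∈ spanningTrees G | s(u, v) ∉ T.edgeSet} := by
    ext S
    constructor
    · rintro ⟨T, hT, rfl⟩
      obtain ⟨hstruct, hRle, hRcard, hRne⟩ := hfacts T hT
      obtain ⟨⟨hTle, hTtree⟩, hTiff⟩ := hT
      have hkmiss : pathEdge u v n hn k ∉ T.edgeSet := fun hc => (hTiff k).mp hc rfl
      have hconn : (f T).Connected :=
        connected_fwd_miss u v n hn hNe G hTle hTtree.isConnected k hkmiss
      exact ⟨⟨hRle.trans sdiff_le, isTree_of_connected_ncard hconn hRcard⟩, hRne⟩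
    · rintro ⟨⟨hSle, hStree⟩, hSe⟩
      have hSconn := hStree.isConnected
      refine ⟨liftV n S ⊔ pathG u v n (fun j => j ≠ k), ⟨⟨?_, ?_⟩, ?_⟩, ?_⟩
      · rw [subdiv_eq]
        exact sup_le_sup (map_monotone _ (le_sdiff_edge u v hSle hSe))
          (pathG_mono u v n hn (fun _ _ => trivial))
      · refine isTree_of_connected_ncard (connected_back_miss u v n hn hSconn k) ?_
        rw [ncard_edgeSet_lift_sup_path u v n huv hn, ncard_setOf_ne]
        have := isTree_ncard_edgeSet hStree
        omega
      · intro j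
        rw [edgeSet_sup]
        constructor
        · rintro (hc | hc)
          · exact absurd hc (pathEdge_ne_lift u v n hn S j)
          · rw [pathG_edgeSet u v n hn] at hc
            obtain ⟨j', hj', hjj⟩ := hc
            rwa [← pathEdge_injective u v n huv hn hjj]
        · intro hj
          refine Or.inr ?_
          rw [pathG_edgeSet u v n hn]
          exact ⟨j, hj, rfl⟩
      · rw [hfdef]
        simp only []
        rw [comap_sup, comap_liftV, comap_pathG, sup_bot_eq]
  rw [← himg, Set.ncard_image_of_injOn hinj]

end SubdivLemmas

/-- The total number of spanning trees of `G^n` equals the number of spanning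
trees of `G` containing `e`, plus `(n+1)` times the number of spanning trees
of `G` not containing `e`. -/
theorem subdiv_card_spanningTrees {V : Type*} [Fintype V] (G : SimpleGraph V)
    (hG : G.Connected) (u v : V) (he : G.Adj u v) (n : ℕ) (hn : 1 ≤ n) :
    (spanningTrees (subdiv G u v n)).ncard =
      {T ∈ spanningTrees G | s(u, v) ∈ T.edgeSet}.ncard +
        (n + 1) * {T ∈ spanningTrees G | s(u, v) ∉ T.edgeSet}.ncard := by
  classical
  set Afull : Set (SimpleGraph (V ⊕ Fin n)) :=
    {T | T ∈ spanningTrees (subdiv G u v n) ∧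
      ∀ j, pathEdge u v n hn j ∈ T.edgeSet} with hAfull
  set Ak : Fin (n+1) → Set (SimpleGraph (V ⊕ Fin n)) :=
    fun k => {T | T ∈ spanningTrees (subdiv G u v n) ∧
      ∀ j, pathEdge u v n hn j ∈ T.edgeSet ↔ j ≠ k} with hAk
  have hsplit : spanningTrees (subdiv G u v n) = Afull ∪ ⋃ k, Ak k := by
    ext T
    constructor
    · intro hT
      by_cases hall : ∀ j, pathEdge u v n hn j ∈ T.edgeSet
      · exact Or.inl ⟨hT, hall⟩
      · push_neg at hall
        obtain ⟨k, hk⟩ := hall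
        refine Or.inr (Set.mem_iUnion.mpr ⟨k, hT, fun j => ⟨?_, ?_⟩⟩)
        · rintro hj rfl
          exact hk hj
        · intro hjk
          by_contra hj
          rcases lt_trichotomy (j : ℕ) (k : ℕ) with h | h | h
          · exact at_most_one_missing_s1 u v n hn G hT.1 hT.2.isConnected h hj hk
          · exact hjk (Fin.ext h)
          · exact at_most_one_missing_s1 u v n hn G hT.1 hT.2.isConnected h hk hj
    · rintro (⟨hT, -⟩ | hT)
      · exact hT
      · obtain ⟨k, hk, -⟩ := Set.mem_iUnion.mp hT
        exact hk
  have hdisj : Disjoint Afull (⋃ k, Ak k) := by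
    rw [Set.disjoint_left]
    rintro T ⟨-, hall⟩ hmem
    obtain ⟨k, -, hiff⟩ := Set.mem_iUnion.mp hmem
    exact (hiff k).mp (hall k) rfl
  have hpair : Pairwise (Function.onFun Disjoint Ak) := by
    intro j k hjk
    rw [Function.onFun, Set.disjoint_left]
    rintro T ⟨-, hTj⟩ ⟨-, hTk⟩
    exact (hTj j).mp ((hTk j).mpr hjk) rfl
  have hUcard : (⋃ k, Ak k).ncard = ∑ k, (Ak k).ncard := by
    have hfin : ∀ k, Fintype (Ak k) := fun k => (Set.toFinite _).fintype
    rw [← Nat.card_coe_set_eq, Nat.card_congr (Set.unionEqSigmaOfDisjoint hpair)]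
    simp only [Nat.card_eq_fintype_card, Fintype.card_sigma]
    refine Finset.sum_congr rfl fun k _ => ?_
    rw [← Nat.card_eq_fintype_card, Nat.card_coe_set_eq]
  rw [hsplit, Set.ncard_union_eq hdisj (Set.toFinite _) (Set.toFinite _), hUcard]
  have h1 : Afull.ncard = {T ∈ spanningTrees G | s(u, v) ∈ T.edgeSet}.ncard :=
    ncard_full_piece u v n hG he hn
  have h2 : ∀ k, (Ak k).ncard = {T ∈ spanningTrees G | s(u, v) ∉ T.edgeSet}.ncard :=
    fun k => ncard_miss_piece u v n hG he hn k
  rw [h1]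
  congr 1
  rw [Finset.sum_congr rfl (fun k _ => h2 k), Finset.sum_const, Finset.card_univ,
    Fintype.card_fin, smul_eq_mul]
end

section
/- The signed spanning-tree sum of G^n satisfies: the sum over all spanning trees T' of G^n of (−1)^{v(T')} equals (−1)^n · ( x + (n+1)·y ), where x is the sum of (−1)^{v(T)} over spanning trees T of G containing e, and y is the sum of (−1)^{v(T)} over spanning trees T of G not containing e. -/
open Sum

namespace SubAux

open SimpleGraph Set

variable {X : Type*}

lemma reach_transfer {Y : Type*} {A : SimpleGraph X} {B : SimpleGraph Y} (f : X → Y)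
    (h : ∀ x y, A.Adj x y → B.Reachable (f x) (f y)) {x y : X} (hr : A.Reachable x y) :
    B.Reachable (f x) (f y) := by
  obtain ⟨w⟩ := hr
  induction w with
  | nil => exact Reachable.refl _
  | cons a p ih => exact (h _ _ a).trans ih

lemma graph_finite [Finite X] : Finite (SimpleGraph X) :=
  Finite.of_injective (fun G => G.Adj) fun _ _ h => SimpleGraph.ext h

lemma card_le_of_connected [Fintype X] {H : SimpleGraph X} (hc : H.Connected) :
    Fintype.card X ≤ H.edgeSet.ncard + 1 := by
  classical
  have : Nonempty X := hc.nonempty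
  inhabit X
  have key : ∀ w : X, w ≠ default →
      ∃ x : X, H.Adj w x ∧ H.dist x default + 1 = H.dist w default := by
    intro w hw
    obtain ⟨p, hp⟩ := hc.exists_walk_length_eq_dist w default
    have hpos : 0 < H.dist w default := hc.pos_dist_of_ne hw
    cases p with
    | nil => rw [← hp] at hpos; simp at hpos
    | @cons _ x _ h q =>
      refine ⟨x, h, ?_⟩
      have h1 : H.dist x default ≤ q.length := dist_le q
      have h2 : H.dist w x ≤ 1 := by
        simpa using dist_le (Walk.cons h Walk.nil)
      have h3 : H.dist w default ≤ H.dist w x + H.dist x default := hc.dist_triangle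
      simp only [Walk.length_cons] at hp
      omega
  choose nxt hadj hdist using key
  let f : {w : X // w ≠ default} → H.edgeSet := fun w =>
    ⟨s(w.1, nxt w.1 w.2), hadj w.1 w.2⟩
  have hfinj : Function.Injective f := by
    rintro ⟨w, hw⟩ ⟨w', hw'⟩ hww
    have h := Subtype.ext_iff.mp hww
    simp only [f, Sym2.eq_iff] at h
    rcases h with ⟨h1, -⟩ | ⟨h1, h2⟩
    · exact Subtype.ext h1
    · exfalso
      have d1 := hdist w hw
      have d2 := hdist w' hw'
      rw [← h1, ← h2] at d2
      omega
  have hcard := Fintype.card_le_of_injective f hfinj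
  have h1 : Fintype.card {w : X // w ≠ default} = Fintype.card X - 1 := by
    simp [Fintype.card_subtype_compl]
  have h2 : Fintype.card H.edgeSet = H.edgeSet.ncard := by
    rw [Set.ncard_eq_toFinset_card']
    simp
  have : 0 < Fintype.card X := Fintype.card_pos
  omega

lemma isTree_of_connected_of_card [Fintype X] {H : SimpleGraph X} (hc : H.Connected)
    (hcard : H.edgeSet.ncard + 1 = Fintype.card X) : H.IsTree := by
  classical
  refine ⟨hc, ?_⟩
  by_contra hcyc
  rw [isAcyclic_iff_forall_edge_isBridge] at hcyc
  push_neg at hcyc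
  obtain ⟨e, he, hbr⟩ := hcyc
  induction e with
  | h a b =>
  rw [mem_edgeSet] at he
  rw [isBridge_iff] at hbr
  push_neg at hbr
  have hreach : (H \ fromEdgeSet {s(a, b)}).Reachable a b := hbr
  set H' : SimpleGraph X := H \ fromEdgeSet {s(a, b)} with hH'
  have hstep : ∀ x y, H.Adj x y → H'.Reachable x y := by
    intro x y hxy
    by_cases hxe : s(x, y) = s(a, b)
    · rcases Sym2.eq_iff.mp hxe with ⟨rfl, rfl⟩ | ⟨rfl, rfl⟩
      · exact hreach
      · exact hreach.symm
    · refine Adj.reachable ?_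
      rw [sdiff_adj, fromEdgeSet_adj]
      exact ⟨hxy, fun hc => hxe hc.1⟩
  have hconn' : H'.Connected := by
    rw [connected_iff]
    refine ⟨fun x y => ?_, hc.nonempty⟩
    have := reach_transfer (A := H) (B := H') id (fun x y h => hstep x y h)
      (hc.preconnected x y)
    simpa using this
  have hE' : H'.edgeSet = H.edgeSet \ {s(a, b)} := by
    rw [hH', edgeSet_sdiff, edgeSet_fromEdgeSet]
    have : ¬ (s(a,b) : Sym2 X).IsDiag := by simp [he.ne]
    ext ed
    simp only [Set.mem_diff, Set.mem_singleton_iff, Set.mem_setOf_eq]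
    constructor
    · rintro ⟨h1, h2⟩
      refine ⟨h1, fun hed => h2 ⟨hed, ?_⟩⟩
      subst hed; exact this
    · rintro ⟨h1, h2⟩
      exact ⟨h1, fun hed => h2 hed.1⟩
  have hle := card_le_of_connected hconn'
  rw [hE'] at hle
  have hmem : s(a, b) ∈ H.edgeSet := he
  have hfin : H.edgeSet.Finite := Set.toFinite _
  rw [Set.ncard_diff_singleton_of_mem hmem] at hle
  have hpos : 0 < H.edgeSet.ncard := by
    rw [Set.ncard_pos hfin]
    exact ⟨_, hmem⟩
  omega

lemma isTree_ncard [Fintype X] {H : SimpleGraph X} (ht : H.IsTree) :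
    H.edgeSet.ncard + 1 = Fintype.card X := by
  classical
  have : Fintype H.edgeSet := Fintype.ofFinite _
  have := ht.card_edgeFinset
  rw [Set.ncard_eq_toFinset_card']
  convert this using 2
  congr 1





variable (u v : V) (n : ℕ)

/-- Vertices along the subdivision path. -/
def pv (j : ℕ) : V ⊕ Fin n :=
  if h0 : j = 0 then inl u else if h : j ≤ n then inr ⟨j - 1, by omega⟩ else inl v

def pathEdge (k : ℕ) : Sym2 (V ⊕ Fin n) := s(pv u v n k, pv u v n (k + 1))

def liftEdges (T : SimpleGraph V) (K : Set ℕ) : Set (Sym2 (V ⊕ Fin n)) :=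
  (Sym2.map inl '' (T.edgeSet \ {s(u, v)})) ∪ (pathEdge u v n '' (K ∩ Set.Iic n))

def lift (T : SimpleGraph V) (K : Set ℕ) : SimpleGraph (V ⊕ Fin n) :=
  fromEdgeSet (liftEdges u v n T K)

variable {u v n}

@[simp] lemma pv_zero : pv u v n 0 = inl u := by simp [pv]

lemma pv_last : pv u v n (n + 1) = inl v := by simp [pv]

lemma pv_mid {j : ℕ} (h0 : j ≠ 0) (h : j ≤ n) (hlt : j - 1 < n) :
    pv u v n j = inr ⟨j - 1, hlt⟩ := by simp [pv, h0, h]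

lemma pv_inj (hne : u ≠ v) {j k : ℕ} (hj : j ≤ n + 1) (hk : k ≤ n + 1)
    (h : pv u v n j = pv u v n k) : j = k := by
  unfold pv at h
  split_ifs at h <;> simp_all [Fin.mk.injEq] <;> omega

lemma pathEdge_injOn (hne : u ≠ v) {k l : ℕ} (hk : k ≤ n) (hl : l ≤ n)
    (h : pathEdge u v n k = pathEdge u v n l) : k = l := by
  rw [pathEdge, pathEdge, Sym2.eq_iff] at h
  rcases h with ⟨h1, -⟩ | ⟨h1, h2⟩
  · exact pv_inj hne (by omega) (by omega) h1
  · have e1 := pv_inj hne (j := k) (k := l + 1) (by omega) (by omega) h1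
    have e2 := pv_inj hne (j := k + 1) (k := l) (by omega) (by omega) h2
    omega

lemma pathEdge_ne_inl_inl (hn : 1 ≤ n) {k : ℕ} (hk : k ≤ n) (a b : V) :
    pathEdge u v n k ≠ s(inl a, inl b) := by
  intro h
  rw [pathEdge, Sym2.eq_iff] at h
  rcases Nat.eq_zero_or_pos k with rfl | hk1
  · have h1 : pv u v n 1 = (inr ⟨0, by omega⟩ : V ⊕ Fin n) := pv_mid (by omega) hn (by omega)
    rcases h with ⟨-, h2⟩ | ⟨-, h2⟩ <;> rw [h1] at h2 <;> simp at h2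
  · have h1 : pv u v n k = (inr ⟨k - 1, by omega⟩ : V ⊕ Fin n) :=
      pv_mid (by omega) hk (by omega)
    rcases h with ⟨h2, -⟩ | ⟨h2, -⟩ <;> rw [h1] at h2 <;> simp at h2

lemma not_isDiag_pathEdge (hne : u ≠ v) {k : ℕ} (hk : k ≤ n) :
    ¬ (pathEdge u v n k).IsDiag := by
  rw [pathEdge, Sym2.mk_isDiag_iff]
  intro h
  have := pv_inj hne (j := k) (k := k + 1) (by omega) (by omega) h
  omega

lemma edgeSet_lift (hne : u ≠ v) (hn : 1 ≤ n) (T : SimpleGraph V) (K : Set ℕ) :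
    (lift u v n T K).edgeSet = liftEdges u v n T K := by
  rw [lift, edgeSet_fromEdgeSet, sdiff_eq_left]
  rw [Set.disjoint_left]
  rintro ed (⟨ed₀, h0, rfl⟩ | ⟨k, hk, rfl⟩) hdiag
  · induction ed₀ with
    | h a b =>
      have : a ≠ b := ((mem_edgeSet _).mp h0.1).ne
      simp only [Sym2.map_pair_eq, Set.mem_setOf_eq, Sym2.mk_isDiag_iff] at hdiag
      exact this (inl_injective hdiag)
  · exact not_isDiag_pathEdge hne hk.2 hdiag

lemma lift_adj (T : SimpleGraph V) (K : Set ℕ) {x y : V ⊕ Fin n} :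
    (lift u v n T K).Adj x y ↔ s(x, y) ∈ liftEdges u v n T K ∧ x ≠ y := by
  rw [lift]; exact fromEdgeSet_adj _

lemma mem_liftEdges_inl_inl (hn : 1 ≤ n) {T : SimpleGraph V} {K : Set ℕ} {a b : V} :
    s(inl a, inl b) ∈ liftEdges u v n T K ↔ T.Adj a b ∧ s(a, b) ≠ s(u, v) := by
  constructor
  · rintro (⟨ed₀, h0, hmap⟩ | ⟨k, hk, hpe⟩)
    · induction ed₀ with
      | h c d =>
        rw [Sym2.map_pair_eq, Sym2.eq_iff] at hmap
        rcases hmap with ⟨hc, hd⟩ | ⟨hc, hd⟩ <;>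
          obtain rfl := inl_injective hc <;> obtain rfl := inl_injective hd
        · exact ⟨(mem_edgeSet _).mp h0.1, h0.2⟩
        · refine ⟨((mem_edgeSet _).mp h0.1).symm, ?_⟩
          rw [Sym2.eq_swap]; exact h0.2
    · exact absurd hpe (pathEdge_ne_inl_inl hn hk.2 a b)
  · rintro ⟨hadj, hne'⟩
    exact Or.inl ⟨s(a, b), ⟨(mem_edgeSet _).mpr hadj, hne'⟩, by rw [Sym2.map_pair_eq]⟩

lemma pathEdge_mem_liftEdges (hne : u ≠ v) (hn : 1 ≤ n) {T : SimpleGraph V} {K : Set ℕ}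
    {k : ℕ} (hk : k ≤ n) :
    pathEdge u v n k ∈ liftEdges u v n T K ↔ k ∈ K := by
  constructor
  · rintro (⟨ed₀, h0, hmap⟩ | ⟨l, hl, hpe⟩)
    · exfalso
      induction ed₀ with
      | h c d =>
        rw [Sym2.map_pair_eq] at hmap
        exact pathEdge_ne_inl_inl hn hk c d hmap.symm
    · obtain rfl := pathEdge_injOn hne hl.2 hk hpe
      exact hl.1
  · intro hkK
    exact Or.inr ⟨k, ⟨hkK, hk⟩, rfl⟩

lemma exists_pathEdge_of_inr_mem {T : SimpleGraph V} {K : Set ℕ} {x y : V ⊕ Fin n}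
    (hxy : s(x, y) ∈ liftEdges u v n T K) (h : (∃ i, x = inr i) ∨ ∃ i, y = inr i) :
    ∃ k ≤ n, k ∈ K ∧ s(x, y) = pathEdge u v n k := by
  rcases hxy with ⟨ed₀, h0, hmap⟩ | ⟨k, hk, hpe⟩
  · exfalso
    induction ed₀ with
    | h c d =>
      rw [Sym2.map_pair_eq, Sym2.eq_iff] at hmap
      rcases h with ⟨i, rfl⟩ | ⟨i, rfl⟩ <;> rcases hmap with ⟨h1, h2⟩ | ⟨h1, h2⟩ <;>
        simp_all
  · exact ⟨k, hk.2, hk.1, hpe.symm⟩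

lemma liftEdges_mono {T T' : SimpleGraph V} {K K' : Set ℕ} (hT : T ≤ T') (hK : K ⊆ K') :
    liftEdges u v n T K ⊆ liftEdges u v n T' K' := by
  apply Set.union_subset_union
  · apply Set.image_mono
    apply Set.diff_subset_diff_left
    exact edgeSet_subset_edgeSet.mpr hT
  · exact Set.image_mono (Set.inter_subset_inter_left _ hK)




lemma pathEdge_eq {k : ℕ} (hk : k ≤ n) (hn : 1 ≤ n) :
    (k = 0 ∧ pathEdge u v n k = s(inl u, (inr ⟨0, by omega⟩ : V ⊕ Fin n)))
    ∨ (k = n ∧ pathEdge u v n k = s((inr ⟨n - 1, by omega⟩ : V ⊕ Fin n), inl v))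
    ∨ (∃ h2 : k < n, 1 ≤ k ∧
        pathEdge u v n k = s((inr ⟨k - 1, by omega⟩ : V ⊕ Fin n), inr ⟨k, h2⟩)) := by
  rcases Nat.eq_zero_or_pos k with rfl | hk1
  · refine Or.inl ⟨rfl, ?_⟩
    rw [pathEdge, pv_zero, pv_mid (j := 1) (by omega) hn (by omega)]
  · rcases eq_or_lt_of_le hk with rfl | hklt
    · refine Or.inr (Or.inl ⟨rfl, ?_⟩)
      rw [pathEdge, pv_last, pv_mid (j := k) (by omega) le_rfl (by omega)]
    · refine Or.inr (Or.inr ⟨hklt, hk1, ?_⟩)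
      rw [pathEdge, pv_mid (j := k) (by omega) hk (by omega),
        pv_mid (j := k + 1) (by omega) (by omega) (by omega)]
      simp

lemma subdiv_eq_lift (hne : u ≠ v) (hn : 1 ≤ n) (G : SimpleGraph V) :
    subdiv G u v n = lift u v n G Set.univ := by
  ext x y
  rw [lift_adj, subdiv, fromRel_adj]
  rcases x with a | i <;> rcases y with b | j
  · -- inl inl
    rw [mem_liftEdges_inl_inl hn]
    constructor
    · rintro ⟨hne', h | h⟩
      · exact ⟨⟨h.1, h.2⟩, hne'⟩
      · exact ⟨⟨h.1.symm, by rw [Sym2.eq_swap]; exact h.2⟩, hne'⟩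
    · rintro ⟨⟨h1, h2⟩, hne'⟩
      exact ⟨hne', Or.inl ⟨h1, h2⟩⟩
  · -- inl inr
    constructor
    · rintro ⟨hne', h | h⟩
      · refine ⟨Or.inr ?_, hne'⟩
        rcases h with ⟨rfl, hj⟩ | ⟨rfl, hj⟩
        · obtain rfl : j = (⟨0, hn⟩ : Fin n) := Fin.ext hj
          exact ⟨0, ⟨trivial, Set.mem_Iic.mpr (by omega)⟩,
            by rw [pathEdge, pv_zero, pv_mid (j := 1) (by omega) hn (by omega)]⟩
        · obtain rfl : j = (⟨n - 1, Nat.sub_lt hn Nat.one_pos⟩ : Fin n) := Fin.ext hj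
          refine ⟨n, ⟨trivial, Set.mem_Iic.mpr le_rfl⟩, ?_⟩
          rw [pathEdge, pv_last, pv_mid (j := n) (by omega) le_rfl (by omega), Sym2.eq_swap]
      · exact h.elim
    · rintro ⟨hmem, hne'⟩
      refine ⟨hne', Or.inl ?_⟩
      obtain ⟨k, hk, -, heq⟩ := exists_pathEdge_of_inr_mem hmem (Or.inr ⟨j, rfl⟩)
      rcases pathEdge_eq (u := u) (v := v) hk hn with ⟨rfl, hpe⟩ | ⟨rfl, hpe⟩ | ⟨h2, h1, hpe⟩ <;>
        rw [hpe, Sym2.eq_iff] at heq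
      · rcases heq with ⟨ha, hb⟩ | ⟨ha, hb⟩
        · exact Or.inl ⟨inl_injective ha, by rw [inr_injective hb]⟩
        · simp at ha
      · rcases heq with ⟨ha, hb⟩ | ⟨ha, hb⟩
        · simp at ha
        · exact Or.inr ⟨inl_injective ha, by rw [inr_injective hb]⟩
      · rcases heq with ⟨ha, hb⟩ | ⟨ha, hb⟩ <;> simp at ha
  · -- inr inl
    constructor
    · rintro ⟨hne', h | h⟩
      · exact h.elim
      · refine ⟨Or.inr ?_, hne'⟩
        rcases h with ⟨rfl, hj⟩ | ⟨rfl, hj⟩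
        · obtain rfl : i = (⟨0, hn⟩ : Fin n) := Fin.ext hj
          exact ⟨0, ⟨trivial, Set.mem_Iic.mpr (by omega)⟩,
            by rw [pathEdge, pv_zero, pv_mid (j := 1) (by omega) hn (by omega), Sym2.eq_swap]⟩
        · obtain rfl : i = (⟨n - 1, Nat.sub_lt hn Nat.one_pos⟩ : Fin n) := Fin.ext hj
          refine ⟨n, ⟨trivial, Set.mem_Iic.mpr le_rfl⟩, ?_⟩
          rw [pathEdge, pv_last, pv_mid (j := n) (by omega) le_rfl (by omega)]
    · rintro ⟨hmem, hne'⟩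
      refine ⟨hne', Or.inr ?_⟩
      obtain ⟨k, hk, -, heq⟩ := exists_pathEdge_of_inr_mem hmem (Or.inl ⟨i, rfl⟩)
      rcases pathEdge_eq (u := u) (v := v) hk hn with ⟨rfl, hpe⟩ | ⟨rfl, hpe⟩ | ⟨h2, h1, hpe⟩ <;>
        rw [hpe, Sym2.eq_iff] at heq
      · rcases heq with ⟨ha, hb⟩ | ⟨ha, hb⟩
        · simp at ha
        · exact Or.inl ⟨inl_injective hb, by rw [inr_injective ha]⟩
      · rcases heq with ⟨ha, hb⟩ | ⟨ha, hb⟩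
        · exact Or.inr ⟨inl_injective hb, by rw [inr_injective ha]⟩
        · simp at hb
      · rcases heq with ⟨ha, hb⟩ | ⟨ha, hb⟩ <;> simp at hb
  · -- inr inr
    constructor
    · rintro ⟨hne', h | h⟩
      · refine ⟨Or.inr ?_, hne'⟩
        have hjlt : (j : ℕ) < n := j.is_lt
        have hilt : (i : ℕ) < n := i.is_lt
        refine ⟨(i : ℕ) + 1, ⟨trivial, Set.mem_Iic.mpr (by omega)⟩, ?_⟩
        rw [pathEdge, pv_mid (j := (i : ℕ) + 1) (by omega) (by omega) (by omega),
          pv_mid (j := (i : ℕ) + 2) (by omega) (by omega) (by omega), Sym2.eq_iff]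
        refine Or.inl ⟨?_, ?_⟩ <;> simp only [inr.injEq, Fin.ext_iff, Fin.val_mk] <;> omega
      · refine ⟨Or.inr ?_, hne'⟩
        have hjlt : (j : ℕ) < n := j.is_lt
        have hilt : (i : ℕ) < n := i.is_lt
        refine ⟨(j : ℕ) + 1, ⟨trivial, Set.mem_Iic.mpr (by omega)⟩, ?_⟩
        rw [pathEdge, pv_mid (j := (j : ℕ) + 1) (by omega) (by omega) (by omega),
          pv_mid (j := (j : ℕ) + 2) (by omega) (by omega) (by omega), Sym2.eq_iff]
        refine Or.inr ⟨?_, ?_⟩ <;> simp only [inr.injEq, Fin.ext_iff, Fin.val_mk] <;> omega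
    · rintro ⟨hmem, hne'⟩
      refine ⟨hne', ?_⟩
      obtain ⟨k, hk, -, heq⟩ := exists_pathEdge_of_inr_mem hmem (Or.inl ⟨i, rfl⟩)
      rcases pathEdge_eq (u := u) (v := v) hk hn with ⟨rfl, hpe⟩ | ⟨rfl, hpe⟩ | ⟨h2, h1, hpe⟩ <;>
        rw [hpe, Sym2.eq_iff] at heq
      · rcases heq with ⟨ha, hb⟩ | ⟨ha, hb⟩ <;> simp at ha hb
      · rcases heq with ⟨ha, hb⟩ | ⟨ha, hb⟩ <;> simp at ha hb
      · rcases heq with ⟨ha, hb⟩ | ⟨ha, hb⟩ <;>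
          simp only [inr.injEq, Fin.ext_iff, Fin.val_mk] at ha hb
        · refine Or.inl ?_
          show (j : ℕ) = (i : ℕ) + 1
          omega
        · refine Or.inr ?_
          show (i : ℕ) = (j : ℕ) + 1
          omega


lemma subdivSign_map_inl (σ : Sym2 V → ℤ) (ed : Sym2 V) :
    subdivSign (n := n) σ (Sym2.map inl ed) = σ ed := by
  induction ed with
  | h a b => simp [subdivSign]

lemma subdivSign_pathEdge (σ : Sym2 V → ℤ) (hn : 1 ≤ n) {k : ℕ} (hk : k ≤ n) :
    subdivSign σ (pathEdge u v n k) = 1 := by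
  rcases pathEdge_eq (u := u) (v := v) hk hn with ⟨rfl, hpe⟩ | ⟨rfl, hpe⟩ | ⟨h2, h1, hpe⟩ <;>
    rw [hpe] <;> simp [subdivSign]

lemma disjoint_parts (S : Set (Sym2 V)) (hn : 1 ≤ n) (K : Set ℕ) :
    Disjoint (Sym2.map (inl : V → V ⊕ Fin n) '' S) (pathEdge u v n '' (K ∩ Set.Iic n)) := by
  rw [Set.disjoint_left]
  rintro ed ⟨ed₀, h0, rfl⟩ ⟨k, hk, hpe⟩
  induction ed₀ with
  | h a b =>
    rw [Sym2.map_pair_eq] at hpe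
    exact pathEdge_ne_inl_inl hn hk.2 a b hpe

lemma ncard_inter_Iic {K : Set ℕ} : ((K ∩ Set.Iic n)).Finite :=
  (Set.finite_Iic n).inter_of_right K

lemma ncard_liftEdges [Fintype V] (hne : u ≠ v) (hn : 1 ≤ n) (T : SimpleGraph V) (K : Set ℕ) :
    (liftEdges u v n T K).ncard = (T.edgeSet \ {s(u, v)}).ncard + (K ∩ Set.Iic n).ncard := by
  rw [liftEdges, Set.ncard_union_eq (disjoint_parts _ hn _)
    ((T.edgeSet \ {s(u, v)}).toFinite.image _) (ncard_inter_Iic.image _),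
    Set.ncard_image_of_injOn ((Sym2.map.injective inl_injective).injOn),
    Set.ncard_image_of_injOn (fun k hk l hl h => pathEdge_injOn hne hk.2 hl.2 h)]

lemma posCount_lift [Fintype V] (hne : u ≠ v) (hn : 1 ≤ n) (σ : Sym2 V → ℤ) (T : SimpleGraph V)
    (K : Set ℕ) :
    posCount (subdivSign σ) (lift u v n T K) =
      {ed | ed ∈ T.edgeSet \ {s(u, v)} ∧ σ ed = 1}.ncard + (K ∩ Set.Iic n).ncard := by
  rw [posCount]
  have hset : {ed | ed ∈ (lift u v n T K).edgeSet ∧ subdivSign σ ed = 1}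
      = (Sym2.map inl '' {ed | ed ∈ T.edgeSet \ {s(u, v)} ∧ σ ed = 1})
        ∪ (pathEdge u v n '' (K ∩ Set.Iic n)) := by
    rw [edgeSet_lift hne hn]
    ext ed
    simp only [Set.mem_setOf_eq, Set.mem_union, liftEdges]
    constructor
    · rintro ⟨h1 | h1, hsign⟩
      · obtain ⟨ed₀, h0, rfl⟩ := h1
        exact Or.inl ⟨ed₀, ⟨h0, by rwa [subdivSign_map_inl] at hsign⟩, rfl⟩
      · exact Or.inr h1
    · rintro (⟨ed₀, ⟨h0, hs⟩, rfl⟩ | h1)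
      · exact ⟨Or.inl ⟨ed₀, h0, rfl⟩, by rwa [subdivSign_map_inl]⟩
      · refine ⟨Or.inr h1, ?_⟩
        obtain ⟨k, hk, rfl⟩ := h1
        exact subdivSign_pathEdge σ hn hk.2
  rw [hset, Set.ncard_union_eq (disjoint_parts _ hn _)
    (({ed | ed ∈ T.edgeSet \ {s(u, v)} ∧ σ ed = 1}).toFinite.image _)
    (ncard_inter_Iic.image _),
    Set.ncard_image_of_injOn ((Sym2.map.injective inl_injective).injOn),
    Set.ncard_image_of_injOn (fun k hk l hl h => pathEdge_injOn hne hk.2 hl.2 h)]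

lemma ncard_Iic : (Set.Iic n).ncard = n + 1 := by
  rw [← Finset.coe_Iic, Set.ncard_coe_finset, Nat.card_Iic]

lemma ncard_Iic_inter_univ : ((Set.univ : Set ℕ) ∩ Set.Iic n).ncard = n + 1 := by
  rw [Set.univ_inter, ncard_Iic]

lemma ncard_Iic_compl_singleton {k : ℕ} (hk : k ≤ n) :
    (({k}ᶜ : Set ℕ) ∩ Set.Iic n).ncard = n := by
  have h1 : ({k}ᶜ : Set ℕ) ∩ Set.Iic n = Set.Iic n \ {k} := by
    rw [Set.inter_comm, Set.diff_eq]
  rw [h1, Set.ncard_diff_singleton_of_mem (Set.mem_Iic.mpr hk), ncard_Iic]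
  omega


lemma lift_adj_pathEdge (hne : u ≠ v) {T : SimpleGraph V} {K : Set ℕ} {k : ℕ}
    (hk : k ≤ n) (hkK : k ∈ K) :
    (lift u v n T K).Adj (pv u v n k) (pv u v n (k + 1)) := by
  rw [lift_adj]
  constructor
  · exact Or.inr ⟨k, ⟨hkK, hk⟩, rfl⟩
  · intro h
    have := pv_inj hne (j := k) (k := k + 1) (by omega) (by omega) h
    omega

lemma lift_adj_inl {T : SimpleGraph V} {K : Set ℕ} {a b : V}
    (h : T.Adj a b) (h2 : s(a, b) ≠ s(u, v)) :
    (lift u v n T K).Adj (inl a) (inl b) := by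
  rw [lift_adj]
  refine ⟨Or.inl ⟨s(a, b), ⟨(mem_edgeSet _).mpr h, h2⟩, by rw [Sym2.map_pair_eq]⟩, ?_⟩
  simp [h.ne]

lemma reach_left (hne : u ≠ v) {T : SimpleGraph V} {K : Set ℕ} :
    ∀ j, j ≤ n + 1 → (∀ t, t < j → t ∈ K) →
      (lift u v n T K).Reachable (inl u) (pv u v n j) := by
  intro j
  induction j with
  | zero => intro _ _; rw [pv_zero]
  | succ m ih =>
    intro hm hK
    refine (ih (by omega) (fun t ht => hK t (by omega))).trans ?_
    exact (lift_adj_pathEdge hne (by omega) (hK m (by omega))).reachable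

lemma reach_right (hne : u ≠ v) {T : SimpleGraph V} {K : Set ℕ} :
    ∀ d j, j + d = n + 1 → (∀ t, j ≤ t → t ≤ n → t ∈ K) →
      (lift u v n T K).Reachable (pv u v n j) (inl v) := by
  intro d
  induction d with
  | zero =>
    intro j hj _
    have : j = n + 1 := by omega
    subst this
    rw [pv_last]
  | succ m ih =>
    intro j hj hK
    refine Reachable.trans ?_ (ih (j + 1) (by omega) (fun t ht h2 => hK t (by omega) h2))
    exact (lift_adj_pathEdge hne (by omega) (hK j le_rfl (by omega))).reachable

lemma lift_reach_inl (hne : u ≠ v) (hn : 1 ≤ n) {T : SimpleGraph V} {K : Set ℕ}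
    (he : s(u, v) ∈ T.edgeSet → ∀ j ≤ n, j ∈ K) {a b : V} (hr : T.Reachable a b) :
    (lift u v n T K).Reachable (inl a) (inl b) := by
  refine reach_transfer inl (fun x y hxy => ?_) hr
  by_cases hxe : s(x, y) = s(u, v)
  · have hmem : s(u, v) ∈ T.edgeSet := by rw [← hxe]; exact (mem_edgeSet _).mpr hxy
    have hfull : (lift u v n T K).Reachable (inl u) (inl v) := by
      have := reach_left hne (T := T) (K := K) (n + 1) le_rfl
        (fun t ht => he hmem t (by omega))
      rwa [pv_last] at this
    rcases Sym2.eq_iff.mp hxe with ⟨rfl, rfl⟩ | ⟨rfl, rfl⟩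
    · exact hfull
    · exact hfull.symm
  · exact (lift_adj_inl hxy hxe).reachable

lemma conn_up (hne : u ≠ v) (hn : 1 ≤ n) {T : SimpleGraph V} {K : Set ℕ}
    (hT : T.Connected) (m : ℕ) (hK : ∀ j, j ≤ n → j ≠ m → j ∈ K)
    (he : s(u, v) ∈ T.edgeSet → ∀ j ≤ n, j ∈ K) :
    (lift u v n T K).Connected := by
  rw [connected_iff]
  refine ⟨?_, ⟨inl u⟩⟩
  have hreach : ∀ x, (lift u v n T K).Reachable x (inl u) := by
    intro x
    rcases x with a | i
    · exact lift_reach_inl hne hn he (hT.preconnected a u)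
    · have hpvi : pv u v n ((i : ℕ) + 1) = inr i := by
        rw [pv_mid (j := (i : ℕ) + 1) (by omega) (by omega) (by simp [i.is_lt])]
        simp
      by_cases hcase : ∀ t, t < (i : ℕ) + 1 → t ∈ K
      · have := reach_left (n := n) hne (T := T) (K := K) ((i : ℕ) + 1) (by have := i.is_lt; omega) hcase
        rw [hpvi] at this
        exact this.symm
      · push_neg at hcase
        obtain ⟨t, ht, htK⟩ := hcase
        have htm : t = m := by
          by_contra hc
          exact htK (hK t (by have := i.is_lt; omega) hc)
        have h1 : (lift u v n T K).Reachable (inr i) (inl v) := by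
          have := reach_right hne (T := T) (K := K) (n + 1 - ((i : ℕ) + 1)) ((i : ℕ) + 1)
            (by have := i.is_lt; omega)
            (fun s hs h2 => hK s h2 (by omega))
          rwa [hpvi] at this
        exact h1.trans (lift_reach_inl hne hn he (hT.preconnected v u))
  exact fun x y => (hreach x).trans (hreach y).symm

/-- Projection map used to transfer connectivity downwards. -/
def wmap (u v : V) (m : ℕ) : V ⊕ Fin n → V :=
  Sum.elim id (fun i => if (i : ℕ) + 1 ≤ m then u else v)

lemma wmap_inl {m : ℕ} (a : V) : wmap (n := n) u v m (inl a) = a := rfl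

lemma conn_down (hne : u ≠ v) (hn : 1 ≤ n) {T : SimpleGraph V} {K : Set ℕ} (m : ℕ)
    (hc : (lift u v n T K).Connected)
    (hedge : ∀ k, k ≤ n → k ∈ K →
      T.Reachable (wmap u v m (pv u v n k)) (wmap u v m (pv u v n (k + 1)))) :
    T.Connected := by
  rw [connected_iff]
  refine ⟨fun a b => ?_, ⟨u⟩⟩
  have key : ∀ x y : V ⊕ Fin n, (lift u v n T K).Adj x y →
      T.Reachable (wmap u v m x) (wmap u v m y) := by
    intro x y hxy
    rw [lift_adj] at hxy
    obtain ⟨hmem, hnexy⟩ := hxy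
    rcases hmem with ⟨ed₀, h0, hmap⟩ | ⟨k, hk, hpe⟩
    · induction ed₀ with
      | h c d =>
        rw [Sym2.map_pair_eq, Sym2.eq_iff] at hmap
        rcases hmap with ⟨rfl, rfl⟩ | ⟨rfl, rfl⟩
        · exact ((mem_edgeSet _).mp h0.1).reachable
        · exact ((mem_edgeSet _).mp h0.1).symm.reachable
    · rcases Sym2.eq_iff.mp hpe.symm with ⟨hx, hy⟩ | ⟨hx, hy⟩
      · rw [hx, hy]
        exact hedge k hk.2 hk.1
      · rw [hx, hy]
        exact (hedge k hk.2 hk.1).symm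
  have := reach_transfer (wmap u v m) key (hc.preconnected (inl a) (inl b))
  simpa [wmap_inl] using this


lemma lift_le_subdiv (hne : u ≠ v) (hn : 1 ≤ n) {G T : SimpleGraph V} {K : Set ℕ}
    (hT : T ≤ G) : lift u v n T K ≤ subdiv G u v n := by
  rw [subdiv_eq_lift hne hn, ← edgeSet_subset_edgeSet, edgeSet_lift hne hn,
    edgeSet_lift hne hn]
  exact liftEdges_mono hT (Set.subset_univ _)

lemma card_two [Fintype V] (hne : u ≠ v) : 2 ≤ Fintype.card V :=
  Fintype.one_lt_card_iff_nontrivial.mpr ⟨⟨u, v, hne⟩⟩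

lemma phi1_mem [Fintype V] (hne : u ≠ v) (hn : 1 ≤ n) {G T : SimpleGraph V}
    (hT : T ∈ spanningTrees G) (he : s(u, v) ∈ T.edgeSet) :
    lift u v n T Set.univ ∈ spanningTrees (subdiv G u v n) := by
  obtain ⟨hle, htree⟩ := hT
  refine ⟨lift_le_subdiv hne hn hle, ?_⟩
  refine isTree_of_connected_of_card
    (conn_up hne hn htree.isConnected (n + 1) (fun j hj _ => Set.mem_univ j)
      (fun _ j hj => Set.mem_univ j)) ?_
  rw [edgeSet_lift hne hn, ncard_liftEdges hne hn, ncard_Iic_inter_univ,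
    Fintype.card_sum, Fintype.card_fin]
  have h2 := card_two (u := u) (v := v) hne
  have htc := isTree_ncard htree
  have hdiff : (T.edgeSet \ {s(u, v)}).ncard = T.edgeSet.ncard - 1 :=
    Set.ncard_diff_singleton_of_mem he
  have hpos : 0 < T.edgeSet.ncard := by
    rw [Set.ncard_pos (Set.toFinite _)]; exact ⟨_, he⟩
  omega

lemma phi2_mem [Fintype V] (hne : u ≠ v) (hn : 1 ≤ n) {G T : SimpleGraph V}
    (hT : T ∈ spanningTrees G) (he : s(u, v) ∉ T.edgeSet) {k : ℕ} (hk : k ≤ n) :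
    lift u v n T ({k}ᶜ : Set ℕ) ∈ spanningTrees (subdiv G u v n) := by
  obtain ⟨hle, htree⟩ := hT
  refine ⟨lift_le_subdiv hne hn hle, ?_⟩
  refine isTree_of_connected_of_card
    (conn_up hne hn htree.isConnected k (fun j hj hjk => hjk)
      (fun hmem => absurd hmem he)) ?_
  rw [edgeSet_lift hne hn, ncard_liftEdges hne hn, ncard_Iic_compl_singleton hk,
    Fintype.card_sum, Fintype.card_fin, Set.diff_singleton_eq_self he]
  have htc := isTree_ncard htree
  omega

lemma missing_unique (hne : u ≠ v) (hn : 1 ≤ n) {G : SimpleGraph V}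
    {T' : SimpleGraph (V ⊕ Fin n)} (hle : T' ≤ subdiv G u v n) (hc : T'.Connected)
    {k l : ℕ} (hk : k ≤ n) (hl : l ≤ n)
    (hke : pathEdge u v n k ∉ T'.edgeSet) (hle' : pathEdge u v n l ∉ T'.edgeSet) : k = l := by
  by_contra hkl
  wlog h : k < l generalizing k l
  · exact this hl hk hle' hke (Ne.symm hkl) (by omega)
  set S : Set (V ⊕ Fin n) := {x | ∃ j : Fin n, x = inr j ∧ k ≤ (j : ℕ) ∧ (j : ℕ) < l} with hS
  have hkn : k + 1 ≤ n := by omega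
  have hpvk1 : pv u v n (k + 1) = inr (⟨k, by omega⟩ : Fin n) := by
    rw [pv_mid (j := k + 1) (by omega) hkn (by omega)]
    congr 1
  have hmem1 : pv u v n (k + 1) ∈ S := by
    rw [hpvk1]
    exact ⟨⟨k, by omega⟩, rfl, by simp, by simpa using h⟩
  have hu : (inl u : V ⊕ Fin n) ∉ S := by
    rintro ⟨j, hj, -⟩
    simp at hj
  obtain ⟨w⟩ := hc.preconnected (pv u v n (k + 1)) (inl u)
  obtain ⟨d, -, hdfst, hdsnd⟩ := w.exists_boundary_dart S hmem1 hu
  have hadj : T'.Adj d.toProd.1 d.toProd.2 := d.adj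
  obtain ⟨j, hj, hjk, hjl⟩ := hdfst
  rw [hj] at hadj
  have hedge : s(inr j, d.toProd.2) ∈ liftEdges u v n G Set.univ := by
    have h2 : (subdiv G u v n).Adj (inr j) d.toProd.2 := hle hadj
    rw [subdiv_eq_lift hne hn, lift_adj] at h2
    exact h2.1
  obtain ⟨t, ht, -, heq⟩ := exists_pathEdge_of_inr_mem hedge (Or.inl ⟨j, rfl⟩)
  have hmemT' : s(inr j, d.toProd.2) ∈ T'.edgeSet := (mem_edgeSet _).mpr hadj
  have htk : t ≠ k := by rintro rfl; exact hke (heq ▸ hmemT')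
  have htl : t ≠ l := by rintro rfl; exact hle' (heq ▸ hmemT')
  have hjn : (j : ℕ) < n := j.is_lt
  rw [pathEdge] at heq
  rcases Sym2.eq_iff.mp heq with ⟨hx, hy⟩ | ⟨hx, hy⟩
  · -- inr j = pv t, snd = pv (t+1)
    have ht0 : t ≠ 0 := by
      rintro rfl
      rw [pv_zero] at hx
      simp at hx
    rw [pv_mid (j := t) ht0 ht (by omega)] at hx
    have htj : t = (j : ℕ) + 1 := by
      have := inr_injective hx
      apply_fun Fin.val at this
      simp at this
      omega
    apply hdsnd
    have ht1n : t + 1 ≤ n := by omega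
    rw [hy, pv_mid (j := t + 1) (by omega) ht1n (by omega)]
    exact ⟨⟨t + 1 - 1, by omega⟩, rfl, by simp; omega, by simp; omega⟩
  · -- inr j = pv (t+1), snd = pv t
    have ht1 : t + 1 ≤ n := by
      by_contra hcon
      have : t = n := by omega
      subst this
      rw [pv_last] at hx
      simp at hx
    rw [pv_mid (j := t + 1) (by omega) ht1 (by omega)] at hx
    have htj : t = (j : ℕ) := by
      have := inr_injective hx
      apply_fun Fin.val at this
      simp at this
      omega
    apply hdsnd
    have ht0 : t ≠ 0 := by omega
    rw [hy, pv_mid (j := t) ht0 (by omega) (by omega)]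
    exact ⟨⟨t - 1, by omega⟩, rfl, by simp; omega, by simp; omega⟩


lemma comap_le (hne : u ≠ v) (hn : 1 ≤ n) {G : SimpleGraph V}
    {T' : SimpleGraph (V ⊕ Fin n)} (hle : T' ≤ subdiv G u v n) : T'.comap inl ≤ G := by
  intro a b hab
  have h2 : (subdiv G u v n).Adj (inl a) (inl b) := hle hab
  rw [subdiv_eq_lift hne hn, lift_adj] at h2
  exact ((mem_liftEdges_inl_inl hn).mp h2.1).1

lemma comap_no_e (hne : u ≠ v) (hn : 1 ≤ n) {G : SimpleGraph V}
    {T' : SimpleGraph (V ⊕ Fin n)} (hle : T' ≤ subdiv G u v n) :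
    s(u, v) ∉ (T'.comap inl).edgeSet := by
  intro hmem
  have h1 : T'.Adj (inl u) (inl v) := (mem_edgeSet _).mp hmem
  have h2 := hle h1
  rw [subdiv_eq_lift hne hn, lift_adj] at h2
  exact ((mem_liftEdges_inl_inl hn).mp h2.1).2 rfl

lemma edgeSet_eq_of_le (hne : u ≠ v) (hn : 1 ≤ n) {G : SimpleGraph V}
    {T' : SimpleGraph (V ⊕ Fin n)} (hle : T' ≤ subdiv G u v n) :
    T'.edgeSet = liftEdges u v n (T'.comap inl) {t | pathEdge u v n t ∈ T'.edgeSet} := by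
  ext ed
  constructor
  · intro hmem
    have hsub : ed ∈ liftEdges u v n G Set.univ := by
      have h1 := (edgeSet_subset_edgeSet.mpr hle) hmem
      rwa [subdiv_eq_lift hne hn, edgeSet_lift hne hn] at h1
    rcases hsub with ⟨ed₀, h0, rfl⟩ | ⟨t, htI, rfl⟩
    · left
      induction ed₀ with
      | h a b =>
        refine ⟨s(a, b), ⟨?_, h0.2⟩, rfl⟩
        rw [Sym2.map_pair_eq] at hmem
        exact (mem_edgeSet _).mpr ((mem_edgeSet _).mp hmem)
    · exact Or.inr ⟨t, ⟨hmem, htI.2⟩, rfl⟩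
  · rintro (⟨ed₀, h0, rfl⟩ | ⟨t, htK, rfl⟩)
    · induction ed₀ with
      | h a b =>
        rw [Sym2.map_pair_eq]
        exact (mem_edgeSet _).mpr ((mem_edgeSet _).mp h0.1)
    · exact htK.1

lemma eq_lift_of_le (hne : u ≠ v) (hn : 1 ≤ n) {G : SimpleGraph V}
    {T' : SimpleGraph (V ⊕ Fin n)} (hle : T' ≤ subdiv G u v n) :
    T' = lift u v n (T'.comap inl) {t | pathEdge u v n t ∈ T'.edgeSet} := by
  conv_lhs => rw [← fromEdgeSet_edgeSet T', edgeSet_eq_of_le hne hn hle]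
  rfl

lemma liftEdges_congr {T₁ T₂ : SimpleGraph V} {K₁ K₂ : Set ℕ}
    (h1 : T₁.edgeSet \ {s(u, v)} = T₂.edgeSet \ {s(u, v)})
    (h2 : K₁ ∩ Set.Iic n = K₂ ∩ Set.Iic n) :
    liftEdges u v n T₁ K₁ = liftEdges u v n T₂ K₂ := by
  rw [liftEdges, liftEdges, h1, h2]

lemma edgeSet_fromEdgeSet_single (hne : u ≠ v) :
    (fromEdgeSet {s(u, v)}).edgeSet = {s(u, v)} := by
  rw [edgeSet_fromEdgeSet]
  ext ed
  simp only [Set.mem_diff, Set.mem_singleton_iff, Set.mem_setOf_eq, and_iff_left_iff_imp]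
  rintro rfl
  simp [Sym2.mk_isDiag_iff, hne]

lemma lift_adj_inl_iff (hne : u ≠ v) (hn : 1 ≤ n) {T : SimpleGraph V} {K : Set ℕ} {a b : V} :
    (lift u v n T K).Adj (inl a) (inl b) ↔ T.Adj a b ∧ s(a, b) ≠ s(u, v) := by
  rw [lift_adj, mem_liftEdges_inl_inl hn]
  constructor
  · exact fun h => h.1
  · exact fun h => ⟨h, by simp [h.1.ne]⟩

lemma lift_missing (hne : u ≠ v) (hn : 1 ≤ n) {T : SimpleGraph V} {K : Set ℕ} {k : ℕ}
    (hk : k ≤ n) : pathEdge u v n k ∈ (lift u v n T K).edgeSet ↔ k ∈ K := by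
  rw [edgeSet_lift hne hn, pathEdge_mem_liftEdges hne hn hk]

lemma lift_inj_aux (hne : u ≠ v) (hn : 1 ≤ n) {T₁ T₂ : SimpleGraph V} {K₁ K₂ : Set ℕ}
    (h : lift u v n T₁ K₁ = lift u v n T₂ K₂)
    (he : s(u, v) ∈ T₁.edgeSet ↔ s(u, v) ∈ T₂.edgeSet) : T₁ = T₂ := by
  ext a b
  by_cases hab : s(a, b) = s(u, v)
  · have hiff : ∀ T : SimpleGraph V, T.Adj a b ↔ s(u, v) ∈ T.edgeSet := fun T => by
      rw [← hab]
      exact ((mem_edgeSet _)).symm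
    rw [hiff T₁, hiff T₂]
    exact he
  · constructor <;> intro hadj
    · have h1 := (lift_adj_inl_iff hne hn (K := K₁)).mpr ⟨hadj, hab⟩
      rw [h] at h1
      exact ((lift_adj_inl_iff hne hn).mp h1).1
    · have h1 := (lift_adj_inl_iff hne hn (K := K₂)).mpr ⟨hadj, hab⟩
      rw [← h] at h1
      exact ((lift_adj_inl_iff hne hn).mp h1).1

lemma surj_A [Fintype V] (hne : u ≠ v) (hn : 1 ≤ n) {G : SimpleGraph V} (heG : G.Adj u v)
    {T' : SimpleGraph (V ⊕ Fin n)} (hT' : T' ∈ spanningTrees (subdiv G u v n))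
    (hall : ∀ k ≤ n, pathEdge u v n k ∈ T'.edgeSet) :
    ∃ T : SimpleGraph V, (T ∈ spanningTrees G ∧ s(u, v) ∈ T.edgeSet) ∧
      lift u v n T Set.univ = T' := by
  obtain ⟨hle, htree⟩ := hT'
  set C := T'.comap inl with hC
  set T := C ⊔ fromEdgeSet {s(u, v)} with hT
  have hCe : s(u, v) ∉ C.edgeSet := comap_no_e hne hn hle
  have hTedges : T.edgeSet = C.edgeSet ∪ {s(u, v)} := by
    rw [hT, edgeSet_sup, edgeSet_fromEdgeSet_single hne]
  have heT : s(u, v) ∈ T.edgeSet := by rw [hTedges]; exact Or.inr rfl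
  have hTdiff : T.edgeSet \ {s(u, v)} = C.edgeSet \ {s(u, v)} := by
    rw [hTedges, Set.union_diff_right]
  have hK : {t | pathEdge u v n t ∈ T'.edgeSet} ∩ Set.Iic n = Set.univ ∩ Set.Iic n := by
    ext t
    simp only [Set.mem_inter_iff, Set.mem_setOf_eq, Set.mem_Iic, Set.univ_inter,
      Set.mem_univ, true_and]
    exact ⟨fun h => h.2, fun h => ⟨hall t h, h⟩⟩
  have hlift : lift u v n T Set.univ = T' := by
    rw [eq_lift_of_le hne hn hle, lift, lift]
    congr 1
    refine liftEdges_congr ?_ hK.symm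
    rw [hTdiff, Set.diff_singleton_eq_self hCe]
  refine ⟨T, ⟨⟨?_, ?_⟩, heT⟩, hlift⟩
  · -- T ≤ G
    rw [hT]
    refine sup_le (comap_le hne hn hle) ?_
    intro x y hxy
    rw [fromEdgeSet_adj] at hxy
    rcases Sym2.eq_iff.mp hxy.1 with ⟨rfl, rfl⟩ | ⟨rfl, rfl⟩
    · exact heG
    · exact heG.symm
  · -- T.IsTree
    have hconn : T.Connected := by
      refine conn_down hne hn 0 (hlift ▸ htree.isConnected) ?_
      intro k hk hkK
      rcases Nat.eq_zero_or_pos k with rfl | hk1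
      · have hw : wmap u v 0 (pv u v n (0 + 1)) = v := by
          rw [pv_mid (j := 1) (by omega) hn (by omega)]
          simp [wmap]
        rw [hw, pv_zero, wmap_inl]
        exact ((mem_edgeSet _).mp heT).reachable
      · have hw1 : wmap u v 0 (pv u v n k) = v := by
          rw [pv_mid (j := k) (by omega) hk (by omega)]
          simp [wmap]
        have hw2 : wmap u v 0 (pv u v n (k + 1)) = v := by
          rcases eq_or_lt_of_le hk with rfl | hlt
          · rw [pv_last, wmap_inl]
          · rw [pv_mid (j := k + 1) (by omega) (by omega) (by omega)]
            simp [wmap]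
        rw [hw1, hw2]
    refine isTree_of_connected_of_card hconn ?_
    have htc := isTree_ncard htree
    rw [Fintype.card_sum, Fintype.card_fin] at htc
    have hT'edges := edgeSet_eq_of_le hne hn hle
    have hT'count : T'.edgeSet.ncard = C.edgeSet.ncard + (n + 1) := by
      rw [hT'edges, ncard_liftEdges hne hn, hK, ncard_Iic_inter_univ,
        Set.diff_singleton_eq_self hCe]
    have hTcount : T.edgeSet.ncard = C.edgeSet.ncard + 1 := by
      rw [hTedges, Set.ncard_union_eq (by simpa using hCe) (Set.toFinite _)
        (Set.toFinite _), Set.ncard_singleton]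
    omega

lemma surj_B [Fintype V] (hne : u ≠ v) (hn : 1 ≤ n) {G : SimpleGraph V}
    {T' : SimpleGraph (V ⊕ Fin n)} (hT' : T' ∈ spanningTrees (subdiv G u v n))
    {k₀ : ℕ} (hk₀ : k₀ ≤ n) (hmiss : pathEdge u v n k₀ ∉ T'.edgeSet) :
    ∃ T : SimpleGraph V, (T ∈ spanningTrees G ∧ s(u, v) ∉ T.edgeSet) ∧
      lift u v n T ({k₀}ᶜ : Set ℕ) = T' := by
  obtain ⟨hle, htree⟩ := hT'
  set C := T'.comap inl with hC
  have hCe : s(u, v) ∉ C.edgeSet := comap_no_e hne hn hle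
  have hK : {t | pathEdge u v n t ∈ T'.edgeSet} ∩ Set.Iic n =
      ({k₀}ᶜ : Set ℕ) ∩ Set.Iic n := by
    ext t
    simp only [Set.mem_inter_iff, Set.mem_setOf_eq, Set.mem_Iic, Set.mem_compl_iff,
      Set.mem_singleton_iff]
    constructor
    · rintro ⟨hmem, htn⟩
      refine ⟨fun hc => ?_, htn⟩
      subst hc
      exact hmiss hmem
    · rintro ⟨hne', htn⟩
      refine ⟨?_, htn⟩
      by_contra hc
      exact hne' (missing_unique hne hn hle htree.isConnected htn hk₀ hc hmiss)
  have hlift : lift u v n C ({k₀}ᶜ : Set ℕ) = T' := by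
    rw [eq_lift_of_le hne hn hle, lift, lift]
    congr 1
    exact liftEdges_congr rfl hK.symm
  refine ⟨C, ⟨⟨comap_le hne hn hle, ?_⟩, hCe⟩, hlift⟩
  have hconn : C.Connected := by
    refine conn_down hne hn k₀ (hlift ▸ htree.isConnected) ?_
    intro k hk hkK
    have hkne : k ≠ k₀ := hkK
    have hw : wmap u v k₀ (pv u v n k) = wmap u v k₀ (pv u v n (k + 1)) := by
      have hv1 : wmap u v k₀ (pv u v n k) = if k ≤ k₀ then u else v := by
        rcases Nat.eq_zero_or_pos k with rfl | hk1
        · rw [pv_zero, wmap_inl, if_pos (by omega)]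
        · rw [pv_mid (j := k) (by omega) hk (by omega)]
          simp only [wmap, Sum.elim_inr]
          congr 1
          simp
          omega
      have hv2 : wmap u v k₀ (pv u v n (k + 1)) = if k + 1 ≤ k₀ then u else v := by
        rcases eq_or_lt_of_le hk with rfl | hlt
        · rw [pv_last, wmap_inl, if_neg (by omega)]
        · rw [pv_mid (j := k + 1) (by omega) (by omega) (by omega)]
          simp only [wmap, Sum.elim_inr]
          congr 1
      rw [hv1, hv2]
      by_cases hc : k ≤ k₀
      · rw [if_pos hc, if_pos (by omega)]
      · rw [if_neg hc, if_neg (by omega)]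
    rw [hw]
  refine isTree_of_connected_of_card hconn ?_
  have htc := isTree_ncard htree
  rw [Fintype.card_sum, Fintype.card_fin] at htc
  have hT'count : T'.edgeSet.ncard = C.edgeSet.ncard + n := by
    rw [edgeSet_eq_of_le hne hn hle, ncard_liftEdges hne hn, hK,
      ncard_Iic_compl_singleton hk₀, Set.diff_singleton_eq_self hCe]
  omega


lemma posCount_phi1 [Fintype V] (hne : u ≠ v) (hn : 1 ≤ n) (σ : Sym2 V → ℤ)
    {T : SimpleGraph V} (he : s(u, v) ∈ T.edgeSet) (hsign : σ s(u, v) = 1) :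
    posCount (subdivSign σ) (lift u v n T Set.univ) = posCount σ T + n := by
  rw [posCount_lift hne hn, ncard_Iic_inter_univ]
  have hseteq : {ed | ed ∈ T.edgeSet \ {s(u, v)} ∧ σ ed = 1}
      = {ed | ed ∈ T.edgeSet ∧ σ ed = 1} \ {s(u, v)} := by
    ext ed
    simp only [Set.mem_setOf_eq, Set.mem_diff, Set.mem_singleton_iff]
    tauto
  have hmem : s(u, v) ∈ {ed | ed ∈ T.edgeSet ∧ σ ed = 1} := ⟨he, hsign⟩
  rw [hseteq, Set.ncard_diff_singleton_of_mem hmem]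
  have hpos : 0 < {ed | ed ∈ T.edgeSet ∧ σ ed = 1}.ncard := by
    rw [Set.ncard_pos (Set.toFinite _)]
    exact ⟨_, hmem⟩
  rw [posCount]
  omega

lemma posCount_phi2 [Fintype V] (hne : u ≠ v) (hn : 1 ≤ n) (σ : Sym2 V → ℤ)
    {T : SimpleGraph V} (he : s(u, v) ∉ T.edgeSet) {k : ℕ} (hk : k ≤ n) :
    posCount (subdivSign σ) (lift u v n T ({k}ᶜ : Set ℕ)) = posCount σ T + n := by
  rw [posCount_lift hne hn, ncard_Iic_compl_singleton hk, Set.diff_singleton_eq_self he,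
    posCount]

end SubAux


open SubAux

/-- The sum over all spanning trees `T'` of `G^n` of `(-1)^{v(T')}` equals
`(-1)^n * (x + (n+1) * y)`, where `x` is the sum of `(-1)^{v(T)}` over
spanning trees `T` of `G` containing `e`, and `y` is the corresponding sum
over spanning trees of `G` not containing `e`. -/
theorem subdiv_signed_tree_sum {V : Type*} [Fintype V] (G : SimpleGraph V)
    (hG : G.Connected) (σ : Sym2 V → ℤ)
    (hσ : ∀ ed ∈ G.edgeSet, σ ed = 1 ∨ σ ed = -1)
    (u v : V) (he : G.Adj u v) (hsign : σ s(u, v) = 1)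
    (n : ℕ) (hn : 1 ≤ n) :
    ∑ᶠ T' ∈ spanningTrees (subdiv G u v n),
        (-1 : ℤ) ^ posCount (subdivSign σ) T' =
      (-1 : ℤ) ^ n *
        ((∑ᶠ T ∈ {T ∈ spanningTrees G | s(u, v) ∈ T.edgeSet},
            (-1 : ℤ) ^ posCount σ T) +
          ((n : ℤ) + 1) *
            ∑ᶠ T ∈ {T ∈ spanningTrees G | s(u, v) ∉ T.edgeSet},
              (-1 : ℤ) ^ posCount σ T) := by
  classical
  have hne : u ≠ v := he.ne
  haveI : Finite (SimpleGraph (V ⊕ Fin n)) := graph_finite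
  haveI : Finite (SimpleGraph V) := graph_finite
  set SA := {T ∈ spanningTrees G | s(u, v) ∈ T.edgeSet} with hSA
  set SB := {T ∈ spanningTrees G | s(u, v) ∉ T.edgeSet} with hSB
  set A : Set (SimpleGraph (V ⊕ Fin n)) :=
    {T' | T' ∈ spanningTrees (subdiv G u v n) ∧
      ∀ k ≤ n, pathEdge u v n k ∈ T'.edgeSet} with hA
  set B : Fin (n + 1) → Set (SimpleGraph (V ⊕ Fin n)) := fun k =>
    {T' | T' ∈ spanningTrees (subdiv G u v n) ∧
      pathEdge u v n (k : ℕ) ∉ T'.edgeSet} with hB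
  have hsplit : spanningTrees (subdiv G u v n) = A ∪ ⋃ k, B k := by
    ext T'
    constructor
    · intro h
      by_cases hall : ∀ k ≤ n, pathEdge u v n k ∈ T'.edgeSet
      · exact Or.inl ⟨h, hall⟩
      · push_neg at hall
        obtain ⟨k, hk, hmiss⟩ := hall
        refine Or.inr (Set.mem_iUnion.mpr ⟨⟨k, by omega⟩, h, hmiss⟩)
    · rintro (h | h)
      · exact h.1
      · obtain ⟨k, hk⟩ := Set.mem_iUnion.mp h
        exact hk.1
  have hdisj : Disjoint A (⋃ k, B k) := by
    rw [Set.disjoint_left]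
    rintro T' ⟨-, hall⟩ hmem
    obtain ⟨k, -, hk2⟩ := Set.mem_iUnion.mp hmem
    exact hk2 (hall (k : ℕ) (by omega))
  have hpair : Pairwise (Function.onFun Disjoint B) := by
    intro k l hkl
    rw [Function.onFun, Set.disjoint_left]
    rintro T' ⟨⟨hle, htree⟩, hk2⟩ ⟨-, hl2⟩
    exact hkl (Fin.ext (missing_unique hne hn hle htree.isConnected
      (by omega) (by omega) hk2 hl2))
  have hAsum : ∑ᶠ T ∈ SA, ((-1 : ℤ) ^ n * (-1 : ℤ) ^ posCount σ T)
      = ∑ᶠ T' ∈ A, (-1 : ℤ) ^ posCount (subdivSign σ) T' := by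
    refine finsum_mem_eq_of_bijOn (fun T => lift u v n T Set.univ) ⟨?_, ?_, ?_⟩ ?_
    · rintro T ⟨hT, heT⟩
      refine ⟨phi1_mem hne hn hT heT, fun k hk => ?_⟩
      rw [lift_missing hne hn hk]
      trivial
    · rintro T₁ ⟨hT₁, he₁⟩ T₂ ⟨hT₂, he₂⟩ hliftEq
      exact lift_inj_aux hne hn hliftEq (iff_of_true he₁ he₂)
    · rintro T' ⟨hT', hall⟩
      obtain ⟨T, hmem, hlift⟩ := surj_A hne hn he hT' hall
      exact ⟨T, hmem, hlift⟩
    · rintro T ⟨hT, heT⟩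
      rw [posCount_phi1 hne hn σ heT hsign, pow_add]
      ring
  have hBsum : ∀ k : Fin (n + 1),
      ∑ᶠ T ∈ SB, ((-1 : ℤ) ^ n * (-1 : ℤ) ^ posCount σ T)
        = ∑ᶠ T' ∈ B k, (-1 : ℤ) ^ posCount (subdivSign σ) T' := by
    intro k
    have hk : (k : ℕ) ≤ n := by omega
    refine finsum_mem_eq_of_bijOn (fun T => lift u v n T ({(k : ℕ)}ᶜ : Set ℕ)) ⟨?_, ?_, ?_⟩ ?_
    · rintro T ⟨hT, heT⟩
      refine ⟨phi2_mem hne hn hT heT hk, ?_⟩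
      rw [lift_missing hne hn hk]
      simp
    · rintro T₁ ⟨hT₁, he₁⟩ T₂ ⟨hT₂, he₂⟩ hliftEq
      exact lift_inj_aux hne hn hliftEq (iff_of_false he₁ he₂)
    · rintro T' ⟨hT', hmiss⟩
      obtain ⟨T, hmem, hlift⟩ := surj_B hne hn hT' hk hmiss
      exact ⟨T, hmem, hlift⟩
    · rintro T ⟨hT, heT⟩
      rw [posCount_phi2 hne hn σ heT hk, pow_add]
      ring
  have hpull : ∀ S : Set (SimpleGraph V),
      ∑ᶠ T ∈ S, ((-1 : ℤ) ^ n * (-1 : ℤ) ^ posCount σ T)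
        = (-1 : ℤ) ^ n * ∑ᶠ T ∈ S, (-1 : ℤ) ^ posCount σ T := by
    intro S
    rw [finsum_mem_eq_finite_toFinset_sum _ (Set.toFinite S),
      finsum_mem_eq_finite_toFinset_sum _ (Set.toFinite S), Finset.mul_sum]
  rw [hsplit, finsum_mem_union hdisj (Set.toFinite _) (Set.toFinite _),
    finsum_mem_iUnion hpair fun k => Set.toFinite _, ← hAsum]
  have hconst : ∀ k : Fin (n + 1),
      ∑ᶠ T' ∈ B k, (-1 : ℤ) ^ posCount (subdivSign σ) T'
        = ∑ᶠ T ∈ SB, ((-1 : ℤ) ^ n * (-1 : ℤ) ^ posCount σ T) :=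
    fun k => (hBsum k).symm
  have hFin : ∑ᶠ _ : Fin (n + 1), (∑ᶠ T ∈ SB, ((-1 : ℤ) ^ n * (-1 : ℤ) ^ posCount σ T))
      = (n + 1 : ℕ) • (∑ᶠ T ∈ SB, ((-1 : ℤ) ^ n * (-1 : ℤ) ^ posCount σ T)) := by
    rw [finsum_eq_sum_of_fintype, Finset.sum_const, Finset.card_univ, Fintype.card_fin]
  rw [finsum_congr hconst, hFin, hpull, hpull, nsmul_eq_mul]
  push_cast
  ring
end
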